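/- arXiv:1302.7249 — 3 statements merged into one kernel-verified Lean document; each statement's English description precedes it below -/
import Mathlib

section
/- Let G = [f₁, f₂, …] be a transcendental semigroup which is bounded on some curve Γ going to ∞, i.e., there is a curve Γ ⊂ ℂ tending to ∞ on which every generator fᵢ of G is bounded. Then every connected component of F(G) is simply connected. -/
open Set Filter Topology

noncomputable section

/-- A transcendental entire function: entire (differentiable on all of `ℂ`)
and not a polynomial. -/
def TranscendentalEntire (f : ℂ → ℂ) : Prop :=
  Differentiable ℂ f ∧ ¬ ∃ p : Polynomial ℂ, ∀ z, f z = p.eval z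

/-- A family `𝓕` of entire functions is normal on a set `U`: every sequence in `𝓕`
has a subsequence which either converges locally uniformly on `U` (to a holomorphic
limit), or diverges locally uniformly to `∞` on `U` (i.e. converges to the constant
`∞` locally uniformly with respect to the spherical metric). -/
def NormalOn (F : Set (ℂ → ℂ)) (U : Set ℂ) : Prop :=
  ∀ s : ℕ → ℂ → ℂ, (∀ n, s n ∈ F) →
    ∃ φ : ℕ → ℕ, StrictMono φ ∧
      ((∃ h : ℂ → ℂ, TendstoLocallyUniformlyOn (fun n => s (φ n)) h atTop U) ∨
        (∀ K, K ⊆ U → IsCompact K → ∀ M : ℝ,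
          ∀ᶠ n in atTop, ∀ z ∈ K, M ≤ ‖s (φ n) z‖))

/-- The Fatou set of a family of entire functions: the largest open subset of `ℂ`
on which the family is normal. -/
def fatou (F : Set (ℂ → ℂ)) : Set ℂ :=
  {z | ∃ U : Set ℂ, IsOpen U ∧ z ∈ U ∧ NormalOn F U}

/-- The classical Fatou set of a single entire function: the Fatou set of the
family of its iterates. -/
def fatouFn (f : ℂ → ℂ) : Set ℂ :=
  fatou {g | ∃ n : ℕ, 0 < n ∧ g = f^[n]}

/-- `G` is a transcendental semigroup: a nonempty set of transcendental entire
functions closed under composition. -/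
def IsTransSemigroup (G : Set (ℂ → ℂ)) : Prop :=
  G.Nonempty ∧ (∀ f ∈ G, ∀ g ∈ G, f ∘ g ∈ G) ∧ ∀ f ∈ G, TranscendentalEntire f

/-- Membership in the semigroup (under composition) generated by `S`. -/
inductive InSemigroup (S : Set (ℂ → ℂ)) : (ℂ → ℂ) → Prop
  | base {f : ℂ → ℂ} : f ∈ S → InSemigroup S f
  | comp {f g : ℂ → ℂ} : InSemigroup S f → InSemigroup S g → InSemigroup S (f ∘ g)

/-- The semigroup (under composition) generated by `S`. -/
def semigroupGen (S : Set (ℂ → ℂ)) : Set (ℂ → ℂ) := {f | InSemigroup S f}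

/-- `U` is a connected component of `S`. -/
def IsComponentOf (U S : Set ℂ) : Prop := ∃ z ∈ S, U = connectedComponentIn S z

/-- A plane domain is simply connected iff its complement in the Riemann sphere
(the one-point compactification of `ℂ`) is connected. -/
def SimplyConnectedDomain (U : Set ℂ) : Prop :=
  IsConnected ((fun z : ℂ => (z : OnePoint ℂ)) '' U)ᶜ

/-- A multiply connected domain: not simply connected. -/
def MultiplyConnectedDomain (U : Set ℂ) : Prop := ¬ SimplyConnectedDomain U

/-- A plane domain is doubly connected iff its complement in the Riemann sphere
has exactly two connected components. -/
def DoublyConnectedDomain (U : Set ℂ) : Prop :=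
  ∃ x ∈ ((fun z : ℂ => (z : OnePoint ℂ)) '' U)ᶜ,
    ∃ y ∈ ((fun z : ℂ => (z : OnePoint ℂ)) '' U)ᶜ,
      connectedComponentIn (((fun z : ℂ => (z : OnePoint ℂ)) '' U)ᶜ) x ≠
        connectedComponentIn (((fun z : ℂ => (z : OnePoint ℂ)) '' U)ᶜ) y ∧
      ∀ z ∈ ((fun z : ℂ => (z : OnePoint ℂ)) '' U)ᶜ,
        connectedComponentIn (((fun z : ℂ => (z : OnePoint ℂ)) '' U)ᶜ) z =
            connectedComponentIn (((fun z : ℂ => (z : OnePoint ℂ)) '' U)ᶜ) x ∨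
          connectedComponentIn (((fun z : ℂ => (z : OnePoint ℂ)) '' U)ᶜ) z =
            connectedComponentIn (((fun z : ℂ => (z : OnePoint ℂ)) '' U)ᶜ) y

/-- The subsemigroup `Γ̃_U` of `G`: the subsemigroup generated by those `g ∈ G`
such that the classical Fatou set `F(g)` has a multiply connected component
containing `U`. -/
def tildeGamma (G : Set (ℂ → ℂ)) (U : Set ℂ) : Set (ℂ → ℂ) :=
  semigroupGen {g | g ∈ G ∧ ∃ V, IsComponentOf V (fatouFn g) ∧
    MultiplyConnectedDomain V ∧ U ⊆ V}

/-- `w` is a critical value of `f`: the image of a point where `f'` vanishes. -/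
def CriticalValue (f : ℂ → ℂ) (w : ℂ) : Prop := ∃ z, deriv f z = 0 ∧ f z = w

/-- `w` is an asymptotic value of `f`: there is a curve going to `∞` along which
`f` tends to `w`. -/
def AsymptoticValue (f : ℂ → ℂ) (w : ℂ) : Prop :=
  ∃ γ : ℝ → ℂ, ContinuousOn γ (Ici 0) ∧
    Tendsto (fun t => ‖γ t‖) atTop atTop ∧
    Tendsto (fun t => f (γ t)) atTop (nhds w)

/-- The set `Sing(f⁻¹)` of singular values of `f`: critical values together with
asymptotic values. -/
def SingInv (f : ℂ → ℂ) : Set ℂ := {w | CriticalValue f w ∨ AsymptoticValue f w}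

/-- `f` is of bounded type (class `𝔅`): transcendental entire and `Sing(f⁻¹)` is bounded. -/
def BoundedType (f : ℂ → ℂ) : Prop :=
  TranscendentalEntire f ∧ Bornology.IsBounded (SingInv f)

/-- `f` is of finite type: transcendental entire and `Sing(f⁻¹)` is finite. -/
def FiniteType (f : ℂ → ℂ) : Prop :=
  TranscendentalEntire f ∧ (SingInv f).Finite

/-- The stabilizer `G_U` of a component `U` of `F(G)`: those `g ∈ G` for which the
component `U_g` of `F(G)` containing `g(U)` is `U` itself. -/
def stab (G : Set (ℂ → ℂ)) (U : Set ℂ) : Set (ℂ → ℂ) :=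
  {g | g ∈ G ∧ ∃ z ∈ U, connectedComponentIn (fatou G) (g z) = U}

namespace Stmt2Aux

open Metric Bornology Complex

/-! ### Function theory basics -/

def Noncst (g : ℂ → ℂ) : Prop := ∃ a b : ℂ, g a ≠ g b

lemma analyticOnNhd_univ_of_diff {g : ℂ → ℂ} (hg : Differentiable ℂ g) :
    AnalyticOnNhd ℂ g Set.univ :=
  hg.differentiableOn.analyticOnNhd isOpen_univ

lemma const_of_eventually_const {g : ℂ → ℂ} (hg : Differentiable ℂ g) {z₀ c : ℂ}
    (h : ∀ᶠ w in 𝓝 z₀, g w = c) : ∀ w, g w = c := by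
  have := (analyticOnNhd_univ_of_diff hg).eqOn_of_preconnected_of_eventuallyEq
    (analyticOnNhd_const (v := c)) isPreconnected_univ (Set.mem_univ z₀) h
  exact fun w => this (Set.mem_univ w)

lemma nhds_le_map_nhds {g : ℂ → ℂ} (hg : Differentiable ℂ g) (hnc : Noncst g) (z : ℂ) :
    𝓝 (g z) ≤ Filter.map g (𝓝 z) := by
  have ha : AnalyticAt ℂ g z := analyticOnNhd_univ_of_diff hg z (Set.mem_univ z)
  rcases ha.eventually_constant_or_nhds_le_map_nhds with h | h
  · exfalso
    obtain ⟨a, b, hab⟩ := hnc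
    have := const_of_eventually_const hg h
    exact hab ((this a).trans (this b).symm)
  · exact h

lemma range_mem_nhds {g : ℂ → ℂ} (hg : Differentiable ℂ g) (hnc : Noncst g) (z : ℂ) :
    Set.range g ∈ 𝓝 (g z) := by
  apply nhds_le_map_nhds hg hnc z
  rw [Filter.mem_map]
  exact Filter.univ_mem' (fun w => Set.mem_range_self w)

lemma Noncst.comp {g h : ℂ → ℂ} (hgd : Differentiable ℂ g) (hhd : Differentiable ℂ h)
    (hg : Noncst g) (hh : Noncst h) : Noncst (g ∘ h) := by
  by_contra hc
  rw [Noncst] at hc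
  push_neg at hc
  have hc' : ∀ x, g (h x) = g (h 0) := fun x => hc x 0
  have hev : ∀ᶠ w in 𝓝 (h 0), g w = g (h 0) := by
    filter_upwards [range_mem_nhds hhd hh 0] with w hw
    obtain ⟨x, rfl⟩ := hw
    exact hc' x
  have := const_of_eventually_const hgd hev
  obtain ⟨a, b, hab⟩ := hg
  exact hab ((this a).trans (this b).symm)

lemma noncst_of_transcendental {g : ℂ → ℂ} (hg : TranscendentalEntire g) : Noncst g := by
  by_contra hc
  rw [Noncst] at hc
  push_neg at hc
  exact hg.2 ⟨Polynomial.C (g 0), fun z => by simp [hc z 0]⟩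

lemma exists_large_value {g : ℂ → ℂ} (hg : TranscendentalEntire g) (C : ℝ) :
    ∃ w, C < ‖g w‖ := by
  by_contra hc
  push_neg at hc
  have hb : IsBounded (Set.range g) := by
    rw [isBounded_iff_forall_norm_le]
    exact ⟨C, by rintro _ ⟨w, rfl⟩; simpa using hc w⟩
  obtain ⟨c, hcst⟩ := hg.1.exists_const_forall_eq_of_bounded hb
  exact hg.2 ⟨Polynomial.C c, fun z => by simp [hcst z]⟩

lemma mem_semigroupGen_prop {f : ℕ → ℂ → ℂ} (hf : ∀ i, TranscendentalEntire (f i)) :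
    ∀ g ∈ semigroupGen (Set.range f), Differentiable ℂ g ∧ Noncst g := by
  intro g hg
  induction hg with
  | base hfS =>
    rename_i g'
    obtain ⟨i, rfl⟩ := hfS
    exact ⟨(hf i).1, noncst_of_transcendental (hf i)⟩
  | comp hf' hg' ihf ihg =>
    exact ⟨ihf.1.comp ihg.1, Noncst.comp ihf.1 ihg.1 ihf.2 ihg.2⟩

end Stmt2Aux

namespace Stmt2Aux

/-! ### Normality primitives -/

def Bnd (s : ℕ → ℂ → ℂ) (x : ℂ) : Prop :=
  ∃ C, ∃ᶠ n in Filter.atTop, ‖s n x‖ ≤ C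

def Divg (s : ℕ → ℂ → ℂ) (x : ℂ) : Prop :=
  Filter.Tendsto (fun n => ‖s n x‖) Filter.atTop Filter.atTop

lemma divg_of_not_bnd {s : ℕ → ℂ → ℂ} {x : ℂ} (h : ¬ Bnd s x) : Divg s x := by
  rw [Divg, Filter.tendsto_atTop]
  intro b
  by_contra hb
  rw [Filter.not_eventually] at hb
  refine h ⟨b, hb.mono fun n hn => ?_⟩
  linarith [not_le.mp hn]

lemma not_bnd_of_divg {s : ℕ → ℂ → ℂ} {x : ℂ} (h : Divg s x) : ¬ Bnd s x := by
  rintro ⟨C, hC⟩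
  obtain ⟨n, h1, h2⟩ := ((Filter.tendsto_atTop.mp h (C + 1)).and_frequently hC).exists
  linarith

lemma bnd_of_not_divg {s : ℕ → ℂ → ℂ} {x : ℂ} (h : ¬ Divg s x) : Bnd s x := by
  by_contra hb
  exact h (divg_of_not_bnd hb)

lemma frequently_of_subseq {Q : ℕ → Prop} {ψ : ℕ → ℕ} (hψ : StrictMono ψ)
    (h : ∀ᶠ n in Filter.atTop, Q (ψ n)) : ∃ᶠ m in Filter.atTop, Q m := by
  rw [Filter.frequently_atTop]
  intro a
  obtain ⟨N, hN⟩ := Filter.eventually_atTop.mp h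
  exact ⟨ψ (max N a), le_trans (le_max_right N a) (hψ.le_apply), hN _ (le_max_left N a)⟩

lemma tlu_subseq {S : ℕ → ℂ → ℂ} {h : ℂ → ℂ} {U : Set ℂ} {ψ : ℕ → ℕ}
    (hS : TendstoLocallyUniformlyOn S h Filter.atTop U) (hψ : StrictMono ψ) :
    TendstoLocallyUniformlyOn (fun n => S (ψ n)) h Filter.atTop U := by
  intro u hu x hx
  obtain ⟨t, ht, hev⟩ := hS u hu x hx
  exact ⟨t, ht, (hψ.tendsto_atTop).eventually hev⟩

lemma tlu_bnd_at {S : ℕ → ℂ → ℂ} {h : ℂ → ℂ} {U : Set ℂ} {x : ℂ}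
    (hS : TendstoLocallyUniformlyOn S h Filter.atTop U) (hx : x ∈ U) :
    ∃ C, ∀ᶠ n in Filter.atTop, ‖S n x‖ ≤ C := by
  rw [Metric.tendstoLocallyUniformlyOn_iff] at hS
  obtain ⟨t, ht, hev⟩ := hS 1 one_pos x hx
  have hxt : x ∈ t := mem_of_mem_nhdsWithin hx ht
  refine ⟨‖h x‖ + 1, hev.mono fun n hn => ?_⟩
  have h1 := hn x hxt
  have h2 : ‖S n x‖ ≤ ‖h x‖ + ‖S n x - h x‖ := by
    calc ‖S n x‖ = ‖h x + (S n x - h x)‖ := by ring_nf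
      _ ≤ ‖h x‖ + ‖S n x - h x‖ := norm_add_le _ _
  have h3 : ‖S n x - h x‖ = dist (h x) (S n x) := by
    rw [dist_comm, dist_eq_norm]
  linarith [h2, h3 ▸ h1]

lemma normal_extract {F : Set (ℂ → ℂ)} {U : Set ℂ} (hN : NormalOn F U) {s : ℕ → ℂ → ℂ}
    (hs : ∀ n, s n ∈ F) {x : ℂ} (hx : x ∈ U) {C : ℝ}
    (hb : ∀ n, ‖s n x‖ ≤ C) :
    ∃ φ : ℕ → ℕ, StrictMono φ ∧ ∃ h : ℂ → ℂ, TendstoLocallyUniformlyOn (fun n => s (φ n)) h Filter.atTop U := by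
  obtain ⟨φ, hφ, hAB⟩ := hN s hs
  refine ⟨φ, hφ, ?_⟩
  rcases hAB with hA | hB
  · exact hA
  · exfalso
    obtain ⟨n, hn⟩ :=
      (hB {x} (Set.singleton_subset_iff.mpr hx) isCompact_singleton (C + 1)).exists
    have := hn x rfl
    have := hb (φ n)
    linarith

lemma normalOn_mono {F : Set (ℂ → ℂ)} {U U' : Set ℂ} (hN : NormalOn F U) (hsub : U' ⊆ U) :
    NormalOn F U' := by
  intro s hs
  obtain ⟨φ, hφ, hAB⟩ := hN s hs
  refine ⟨φ, hφ, ?_⟩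
  rcases hAB with ⟨h, hA⟩ | hB
  · exact Or.inl ⟨h, hA.mono hsub⟩
  · exact Or.inr fun K hK hKc M => hB K (hK.trans hsub) hKc M

lemma fatou_isOpen (F : Set (ℂ → ℂ)) : IsOpen (fatou F) := by
  rw [isOpen_iff_forall_mem_open]
  rintro z ⟨U, hUo, hzU, hUn⟩
  exact ⟨U, fun y hy => ⟨U, hUo, hy, hUn⟩, hUo, hzU⟩

lemma exists_normal_nbhd {F : Set (ℂ → ℂ)} {V : Set ℂ} (hV : IsOpen V)
    (hVf : V ⊆ fatou F) {x : ℂ} (hx : x ∈ V) :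
    ∃ U, IsOpen U ∧ x ∈ U ∧ U ⊆ V ∧ NormalOn F U := by
  obtain ⟨U₀, hU₀o, hxU₀, hU₀n⟩ := hVf hx
  exact ⟨U₀ ∩ V, hU₀o.inter hV, ⟨hxU₀, hx⟩, Set.inter_subset_right,
    normalOn_mono hU₀n Set.inter_subset_left⟩

lemma dichotomy {F : Set (ℂ → ℂ)} {V : Set ℂ} (hV : IsOpen V) (hVc : IsPreconnected V)
    (hVf : V ⊆ fatou F) {s : ℕ → ℂ → ℂ} (hs : ∀ n, s n ∈ F) :
    (∀ x ∈ V, Bnd s x) ∨ (∀ x ∈ V, Divg s x) := by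
  have key1 : ∀ x ∈ V, Bnd s x → ∃ U', IsOpen U' ∧ x ∈ U' ∧ ∀ y ∈ U', Bnd s y := by
    rintro x hx ⟨C, hC⟩
    obtain ⟨σ, hσ, hσC⟩ := Filter.extraction_of_frequently_atTop hC
    obtain ⟨U, hUo, hxU, hUV, hUn⟩ := exists_normal_nbhd hV hVf hx
    obtain ⟨φ, hφ, h, hTLU⟩ := normal_extract hUn (fun n => hs (σ n)) hxU hσC
    refine ⟨U, hUo, hxU, fun y hy => ?_⟩
    obtain ⟨C', hC'⟩ := tlu_bnd_at hTLU hy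
    exact ⟨C', frequently_of_subseq (hσ.comp hφ) hC'⟩
  have key2 : ∀ x ∈ V, Divg s x → ∃ U', IsOpen U' ∧ x ∈ U' ∧ ∀ y ∈ U', Divg s y := by
    intro x hx hD
    obtain ⟨U, hUo, hxU, hUV, hUn⟩ := exists_normal_nbhd hV hVf hx
    refine ⟨U, hUo, hxU, fun y hy => ?_⟩
    by_contra hyD
    obtain ⟨C, hC⟩ := bnd_of_not_divg hyD
    obtain ⟨σ, hσ, hσC⟩ := Filter.extraction_of_frequently_atTop hC
    obtain ⟨φ, hφ, h, hTLU⟩ := normal_extract hUn (fun n => hs (σ n)) hy hσC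
    obtain ⟨C', hC'⟩ := tlu_bnd_at hTLU hxU
    exact not_bnd_of_divg hD ⟨C', frequently_of_subseq (hσ.comp hφ) hC'⟩
  by_contra hcon
  push_neg at hcon
  obtain ⟨⟨x₁, hx₁V, hx₁⟩, ⟨x₂, hx₂V, hx₂⟩⟩ := hcon
  have hD1 : Divg s x₁ := divg_of_not_bnd hx₁
  have hB2 : Bnd s x₂ := bnd_of_not_divg hx₂
  set u := ⋃₀ {U' | IsOpen U' ∧ ∀ y ∈ U', Bnd s y} with hu_def
  set v := ⋃₀ {U' | IsOpen U' ∧ ∀ y ∈ U', Divg s y} with hv_def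
  have hu : IsOpen u := isOpen_sUnion fun U' hU' => hU'.1
  have hv : IsOpen v := isOpen_sUnion fun U' hU' => hU'.1
  have hVuv : V ⊆ u ∪ v := by
    intro x hx
    by_cases hB : Bnd s x
    · obtain ⟨U', h1, h2, h3⟩ := key1 x hx hB
      exact Or.inl ⟨U', ⟨h1, h3⟩, h2⟩
    · obtain ⟨U', h1, h2, h3⟩ := key2 x hx (divg_of_not_bnd hB)
      exact Or.inr ⟨U', ⟨h1, h3⟩, h2⟩
  have h1 : (V ∩ u).Nonempty := by
    obtain ⟨U', h1, h2, h3⟩ := key1 x₂ hx₂V hB2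
    exact ⟨x₂, hx₂V, ⟨U', ⟨h1, h3⟩, h2⟩⟩
  have h2 : (V ∩ v).Nonempty := by
    obtain ⟨U', h1, h2, h3⟩ := key2 x₁ hx₁V hD1
    exact ⟨x₁, hx₁V, ⟨U', ⟨h1, h3⟩, h2⟩⟩
  obtain ⟨y, hyV, hyu, hyv⟩ := hVc u v hu hv hVuv h1 h2
  obtain ⟨U1, hU1, hyU1⟩ := hyu
  obtain ⟨U2, hU2, hyU2⟩ := hyv
  exact not_bnd_of_divg (hU2.2 y hyU2) (hU1.2 y hyU1)

end Stmt2Aux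

namespace Stmt2Aux

/-! ### Uniform behaviour on compact subsets -/

lemma cover_data {F : Set (ℂ → ℂ)} {V : Set ℂ} (hV : IsOpen V) (hVf : V ⊆ fatou F)
    {K : Set ℂ} (hK : IsCompact K) (hKV : K ⊆ V) :
    ∃ (r : ℂ → ℝ) (U : ℂ → Set ℂ), (∀ x ∈ K, 0 < r x) ∧ (∀ x ∈ K, IsOpen (U x)) ∧
      (∀ x ∈ K, x ∈ U x) ∧ (∀ x ∈ K, U x ⊆ V) ∧ (∀ x ∈ K, NormalOn F (U x)) ∧
      (∀ x ∈ K, Metric.closedBall x (r x) ⊆ U x) ∧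
      ∃ t : Finset ℂ, ↑t ⊆ K ∧ K ⊆ ⋃ x ∈ t, Metric.ball x (r x) := by
  have hdata : ∀ x ∈ K, ∃ r : ℝ, 0 < r ∧ ∃ U, IsOpen U ∧ x ∈ U ∧ U ⊆ V ∧ NormalOn F U ∧
      Metric.closedBall x r ⊆ U := by
    intro x hx
    obtain ⟨U, hUo, hxU, hUV, hUn⟩ := exists_normal_nbhd hV hVf (hKV hx)
    obtain ⟨r, hr, hrU⟩ := (Metric.nhds_basis_closedBall.mem_iff).mp (hUo.mem_nhds hxU)
    exact ⟨r, hr, U, hUo, hxU, hUV, hUn, hrU⟩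
  choose! r hr U hUo hxU hUV hUn hrU using hdata
  obtain ⟨t, ht⟩ :=
    hK.elim_nhds_subcover' (fun x hx => Metric.ball x (r x)) (fun x hx =>
      Metric.ball_mem_nhds x (hr x hx))
  refine ⟨r, U, hr, hUo, hxU, hUV, hUn, hrU, ?_⟩
  refine ⟨t.image Subtype.val, ?_, ?_⟩
  · intro x hx
    simp only [Finset.coe_image] at hx
    obtain ⟨⟨y, hy⟩, hyt, rfl⟩ := hx
    exact hy
  · intro z hz
    obtain ⟨x, hxt, hzx⟩ := Set.mem_iUnion₂.mp (ht hz)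
    refine Set.mem_iUnion₂.mpr ⟨x.1, ?_, hzx⟩
    exact Finset.mem_image.mpr ⟨x, hxt, rfl⟩

lemma unif_divg {F : Set (ℂ → ℂ)} {V : Set ℂ} (hV : IsOpen V) (hVf : V ⊆ fatou F)
    {s : ℕ → ℂ → ℂ} (hs : ∀ n, s n ∈ F) (hdiv : ∀ x ∈ V, Divg s x)
    {K : Set ℂ} (hK : IsCompact K) (hKV : K ⊆ V) (M : ℝ) :
    ∀ᶠ n in Filter.atTop, ∀ z ∈ K, M ≤ ‖s n z‖ := by
  obtain ⟨r, U, hr, hUo, hxU, hUV, hUn, hrU, t, htK, ht⟩ := cover_data hV hVf hK hKV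
  have hEv : ∀ x ∈ t, ∀ᶠ n in Filter.atTop,
      ∀ z ∈ Metric.closedBall x (r x), M ≤ ‖s n z‖ := by
    intro x hxt
    have hxK : x ∈ K := htK hxt
    by_contra hcon
    rw [Filter.not_eventually] at hcon
    have hcon' : ∃ᶠ n in Filter.atTop,
        ∃ z ∈ Metric.closedBall x (r x), ‖s n z‖ < M :=
      hcon.mono fun n hn => by push_neg at hn; exact hn
    obtain ⟨σ, hσ, hσP⟩ := Filter.extraction_of_frequently_atTop hcon'
    choose zz hzz1 hzz2 using hσP
    obtain ⟨φ, hφ, hAB⟩ := hUn x hxK (fun n => s (σ n)) (fun n => hs _)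
    rcases hAB with ⟨h, hTLU⟩ | hB
    · obtain ⟨C, hC⟩ := tlu_bnd_at hTLU (hxU x hxK)
      exact not_bnd_of_divg (hdiv x (hKV hxK))
        ⟨C, frequently_of_subseq (hσ.comp hφ) hC⟩
    · obtain ⟨n, hn⟩ :=
        (hB (Metric.closedBall x (r x)) (hrU x hxK) (isCompact_closedBall _ _) M).exists
      have h1 := hn (zz (φ n)) (hzz1 (φ n))
      have h2 := hzz2 (φ n)
      linarith
  have hall := (Filter.eventually_all_finset t).mpr hEv
  refine hall.mono fun n hn z hz => ?_
  obtain ⟨x, hxt, hzx⟩ := Set.mem_iUnion₂.mp (ht hz)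
  exact hn x hxt z (Metric.ball_subset_closedBall hzx)

lemma unif_conv {F : Set (ℂ → ℂ)} {V : Set ℂ} (hV : IsOpen V) (hVc : IsPreconnected V)
    (hVf : V ⊆ fatou F) {s : ℕ → ℂ → ℂ} (hs : ∀ n, s n ∈ F)
    {x₀ : ℂ} (hx₀ : x₀ ∈ V) (hb : Bnd s x₀)
    {K : Set ℂ} (hK : IsCompact K) (hKV : K ⊆ V) :
    ∃ φ : ℕ → ℕ, StrictMono φ ∧ ∃ H : ℂ → ℂ,
      TendstoUniformlyOn (fun n => s (φ n)) H Filter.atTop K := by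
  obtain ⟨r, U, hr, hUo, hxU, hUV, hUn, hrU, t, htK, ht⟩ := cover_data hV hVf hK hKV
  have main : ∀ t' : Finset ℂ, ↑t' ⊆ K → ∃ φ : ℕ → ℕ, StrictMono φ ∧
      (∃ x ∈ V, ∃ C, ∀ n, ‖s (φ n) x‖ ≤ C) ∧
      ∀ x ∈ t', ∃ h : ℂ → ℂ,
        TendstoLocallyUniformlyOn (fun n => s (φ n)) h Filter.atTop (U x) := by
    intro t'
    induction t' using Finset.induction_on with
    | empty =>
      intro _
      obtain ⟨C, hC⟩ := hb
      obtain ⟨σ, hσ, hσC⟩ := Filter.extraction_of_frequently_atTop hC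
      exact ⟨σ, hσ, ⟨x₀, hx₀, C, hσC⟩, by simp⟩
    | @insert a t' ha ih =>
      intro hsub
      have hat' : (↑t' : Set ℂ) ⊆ K := by
        refine subset_trans ?_ hsub
        intro y hy
        simp only [Finset.coe_insert, Set.mem_insert_iff]
        exact Or.inr hy
      have haK : a ∈ K := hsub (by simp)
      obtain ⟨φ, hφ, ⟨xb, hxbV, Cb, hCb⟩, hA⟩ := ih hat'
      obtain ⟨φ', hφ', hAB⟩ := hUn a haK (fun n => s (φ n)) (fun n => hs _)
      rcases hAB with ⟨h, hTLU⟩ | hB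
      · refine ⟨φ ∘ φ', hφ.comp hφ', ⟨xb, hxbV, Cb, fun n => hCb (φ' n)⟩, ?_⟩
        intro x hx
        rcases Finset.mem_insert.mp hx with rfl | hx'
        · exact ⟨h, hTLU⟩
        · obtain ⟨h', hT'⟩ := hA x hx'
          exact ⟨h', tlu_subseq (S := fun n => s (φ n)) hT' hφ'⟩
      · exfalso
        have hr' : ∀ n, s (φ (φ' n)) ∈ F := fun n => hs _
        rcases dichotomy hV hVc hVf hr' with hall | hall
        · have hDa : Divg (fun n => s (φ (φ' n))) a := by
            rw [Divg, Filter.tendsto_atTop]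
            intro b
            exact (hB {a} (Set.singleton_subset_iff.mpr (hxU a haK))
              isCompact_singleton b).mono fun n hn => hn a rfl
          exact not_bnd_of_divg hDa (hall a (hKV haK))
        · exact not_bnd_of_divg (hall xb hxbV)
            ⟨Cb, Filter.Frequently.of_forall fun n => hCb (φ' n)⟩
  obtain ⟨φ, hφ, _, hA⟩ := main t htK
  set H : ℂ → ℂ := fun z => limUnder Filter.atTop (fun n => s (φ n) z) with hH
  refine ⟨φ, hφ, H, ?_⟩
  rw [Metric.tendstoUniformlyOn_iff]
  intro ε hε
  have hper : ∀ x ∈ t, ∀ᶠ n in Filter.atTop,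
      ∀ z ∈ Metric.closedBall x (r x), dist (H z) (s (φ n) z) < ε := by
    intro x hxt
    have hxK : x ∈ K := htK hxt
    obtain ⟨h, hTLU⟩ := hA x hxt
    have hTU : TendstoUniformlyOn (fun n => s (φ n)) h Filter.atTop
        (Metric.closedBall x (r x)) :=
      (tendstoLocallyUniformlyOn_iff_forall_isCompact (hUo x hxK)).mp hTLU _
        (hrU x hxK) (isCompact_closedBall _ _)
    have hHh : ∀ z ∈ Metric.closedBall x (r x), H z = h z := fun z hz =>
      (hTU.tendsto_at hz).limUnder_eq
    rw [Metric.tendstoUniformlyOn_iff] at hTU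
    exact (hTU ε hε).mono fun n hn z hz => by rw [hHh z hz]; exact hn z hz
  have hall := (Filter.eventually_all_finset t).mpr hper
  refine hall.mono fun n hn z hz => ?_
  obtain ⟨x, hxt, hzx⟩ := Set.mem_iUnion₂.mp (ht hz)
  exact hn x hxt z (Metric.ball_subset_closedBall hzx)

end Stmt2Aux

namespace Stmt2Aux

/-! ### Maximum modulus arguments -/

lemma frontier_compact {O : Set ℂ} (hOb : Bornology.IsBounded O) : IsCompact (frontier O) :=
  Metric.isCompact_of_isClosed_isBounded isClosed_frontier
    (hOb.closure.subset frontier_subset_closure)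

lemma maxmod_bound {O : Set ℂ} (hOb : Bornology.IsBounded O) {S : ℕ → ℂ → ℂ}
    (hSd : ∀ n, Differentiable ℂ (S n)) {H : ℂ → ℂ}
    (hTU : TendstoUniformlyOn S H Filter.atTop (frontier O)) :
    ∃ C, ∀ᶠ n in Filter.atTop, ∀ z ∈ closure O, ‖S n z‖ ≤ C := by
  rw [Metric.tendstoUniformlyOn_iff] at hTU
  obtain ⟨N, hN⟩ := Filter.eventually_atTop.mp (hTU 1 one_pos)
  obtain ⟨C₀, hC₀⟩ := (frontier_compact hOb).exists_bound_of_continuousOn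
    ((hSd N).continuous.continuousOn)
  refine ⟨C₀ + 2, Filter.eventually_atTop.mpr ⟨N, fun n hn z hz => ?_⟩⟩
  have hfr : ∀ w ∈ frontier O, ‖S n w‖ ≤ C₀ + 2 := by
    intro w hw
    have h1 := hN n hn w hw
    have h2 := hN N le_rfl w hw
    have h3 : dist (S n w) (S N w) ≤ 2 := by
      calc dist (S n w) (S N w) ≤ dist (S n w) (H w) + dist (H w) (S N w) :=
            dist_triangle _ _ _
        _ ≤ 2 := by rw [dist_comm (S n w) (H w)]; linarith
    have h4 : ‖S n w‖ ≤ ‖S N w‖ + dist (S n w) (S N w) := by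
      rw [dist_eq_norm]
      calc ‖S n w‖ = ‖S N w + (S n w - S N w)‖ := by ring_nf
        _ ≤ ‖S N w‖ + ‖S n w - S N w‖ := norm_add_le _ _
    have h5 := hC₀ w hw
    linarith
  have := Complex.norm_le_of_forall_mem_frontier_norm_le hOb ((hSd n).diffContOnCl) hfr hz
  exact this

lemma extend_uniform {O : Set ℂ} (hOb : Bornology.IsBounded O) {S : ℕ → ℂ → ℂ}
    (hSd : ∀ n, Differentiable ℂ (S n)) {H : ℂ → ℂ}
    (hTU : TendstoUniformlyOn S H Filter.atTop (frontier O)) :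
    ∃ H' : ℂ → ℂ, TendstoUniformlyOn S H' Filter.atTop (closure O) := by
  have hcau : ∀ ε : ℝ, 0 < ε → ∃ N, ∀ m ≥ N, ∀ n ≥ N, ∀ z ∈ closure O,
      dist (S m z) (S n z) ≤ ε := by
    intro ε hε
    rw [Metric.tendstoUniformlyOn_iff] at hTU
    obtain ⟨N, hN⟩ := Filter.eventually_atTop.mp (hTU (ε / 2) (by linarith))
    refine ⟨N, fun m hm n hn z hz => ?_⟩
    have hfr : ∀ w ∈ frontier O, ‖S m w - S n w‖ ≤ ε := by
      intro w hw
      have h1 := hN m hm w hw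
      have h2 := hN n hn w hw
      calc ‖S m w - S n w‖ = dist (S m w) (S n w) := (dist_eq_norm _ _).symm
        _ ≤ dist (S m w) (H w) + dist (H w) (S n w) := dist_triangle _ _ _
        _ ≤ ε := by rw [dist_comm (S m w) (H w)]; linarith
    have := Complex.norm_le_of_forall_mem_frontier_norm_le hOb
      (((hSd m).sub (hSd n)).diffContOnCl) hfr hz
    rw [dist_eq_norm]; exact this
  have hptw : ∀ z ∈ closure O, ∃ L, Filter.Tendsto (fun n => S n z) Filter.atTop (𝓝 L) := by
    intro z hz
    apply cauchySeq_tendsto_of_complete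
    rw [Metric.cauchySeq_iff]
    intro ε hε
    obtain ⟨N, hN⟩ := hcau (ε / 2) (by linarith)
    exact ⟨N, fun m hm n hn => lt_of_le_of_lt (hN m hm n hn z hz) (by linarith)⟩
  refine ⟨fun z => limUnder Filter.atTop (fun n => S n z), ?_⟩
  rw [Metric.tendstoUniformlyOn_iff]
  intro ε hε
  obtain ⟨N, hN⟩ := hcau (ε / 2) (by linarith)
  rw [Filter.eventually_atTop]
  refine ⟨N, fun n hn z hz => ?_⟩
  obtain ⟨L, hL⟩ := hptw z hz
  have hH' : limUnder Filter.atTop (fun n => S n z) = L := hL.limUnder_eq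
  have hdist : Filter.Tendsto (fun m => dist (S m z) (S n z)) Filter.atTop
      (𝓝 (dist L (S n z))) := hL.dist tendsto_const_nhds
  have hle : dist L (S n z) ≤ ε / 2 :=
    le_of_tendsto hdist (Filter.eventually_atTop.mpr ⟨N, fun m hm => hN m hm n hn z hz⟩)
  rw [hH']
  calc dist L (S n z) ≤ ε / 2 := hle
    _ < ε := by linarith

/-! ### Covering lemma, minimum modulus -/

lemma cover_disk {g : ℂ → ℂ} (hg : Differentiable ℂ g) {O : Set ℂ}
    (hOb : Bornology.IsBounded O) {R : ℝ} (hR : 0 < R)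
    (hfr : ∀ z ∈ frontier O, R ≤ ‖g z‖)
    {p : ℂ} (hp : p ∈ closure O) (hp0 : g p = 0) {w : ℂ}
    (hw : ‖w‖ < R / 2) :
    ∃ q ∈ closure O, g q = w := by
  by_contra hcon
  push_neg at hcon
  have hw0 : w ≠ 0 := by
    rintro rfl
    exact hcon p hp hp0
  have hne : ∀ z ∈ closure O, g z - w ≠ 0 := fun z hz => sub_ne_zero.mpr (hcon z hz)
  have hd : DiffContOnCl ℂ (fun z => (g z - w)⁻¹) O := by
    refine ⟨DifferentiableOn.inv ((hg.differentiableOn).sub_const w)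
      (fun z hz => hne z (subset_closure hz)), ?_⟩
    exact ContinuousOn.inv₀ ((hg.continuous.continuousOn).sub continuousOn_const) hne
  have hbd : ∀ z ∈ frontier O, ‖(g z - w)⁻¹‖ ≤ (R / 2)⁻¹ := by
    intro z hz
    have h1 : R / 2 ≤ ‖g z - w‖ := by
      have h2 := hfr z hz
      have h3 : ‖g z‖ ≤ ‖g z - w‖ + ‖w‖ := by
        calc ‖g z‖ = ‖(g z - w) + w‖ := by ring_nf
          _ ≤ ‖g z - w‖ + ‖w‖ := norm_add_le _ _
      linarith
    rw [norm_inv]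
    exact inv_anti₀ (by linarith) h1
  have hmax := Complex.norm_le_of_forall_mem_frontier_norm_le hOb hd hbd hp
  rw [norm_inv, hp0, zero_sub, norm_neg] at hmax
  have hwpos : 0 < ‖w‖ := norm_pos_iff.mpr hw0
  have : R / 2 ≤ ‖w‖ :=
    (inv_le_inv₀ hwpos (show (0:ℝ) < R / 2 by linarith)).mp hmax
  linarith

end Stmt2Aux

namespace Stmt2Aux

/-! ### The set of points of large modulus is preconnected -/

lemma preconnected_large {S : ℝ} (hS : 0 ≤ S) :
    IsPreconnected {z : ℂ | S < ‖z‖} := by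
  have hrank : 1 < Module.rank ℝ ℂ := by
    rw [Complex.rank_real_complex]
    exact Cardinal.one_lt_two
  have B : IsPathConnected ({0}ᶜ : Set ℂ) :=
    isPathConnected_compl_singleton_of_one_lt_rank hrank 0
  set F : ℂ → ℂ := fun y => ((S + ‖y‖) * ‖y‖⁻¹) • y with hF
  have A : ContinuousOn F {0}ᶜ := by
    intro y hy
    have hy0 : ‖y‖ ≠ 0 := by simpa using hy
    apply ContinuousAt.continuousWithinAt
    exact ((continuousAt_const.add continuousAt_id.norm).mul
      (continuousAt_id.norm.inv₀ hy0)).smul continuousAt_id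
  have C : IsPathConnected (F '' {0}ᶜ) := B.image' A
  have hFnorm : ∀ y : ℂ, y ≠ 0 → ‖F y‖ = S + ‖y‖ := by
    intro y hy0
    have hny : 0 < ‖y‖ := norm_pos_iff.mpr hy0
    have hpos : (0:ℝ) < (S + ‖y‖) * ‖y‖⁻¹ := mul_pos (by linarith) (inv_pos.mpr hny)
    show ‖((S + ‖y‖) * ‖y‖⁻¹) • y‖ = S + ‖y‖
    rw [norm_smul, Real.norm_eq_abs, abs_of_pos hpos, mul_assoc,
      inv_mul_cancel₀ (ne_of_gt hny), mul_one]
  have himg : F '' {0}ᶜ = {z : ℂ | S < ‖z‖} := by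
    apply Set.Subset.antisymm
    · rintro - ⟨y, hy, rfl⟩
      have hy0 : y ≠ 0 := hy
      have hny : 0 < ‖y‖ := norm_pos_iff.mpr hy0
      have h1 : S < ‖F y‖ := by
        rw [hFnorm y hy0]
        linarith
      simpa [Set.mem_setOf_eq] using h1
    · intro w hw
      have hw' : S < ‖w‖ := by simpa using hw
      have hnw : 0 < ‖w‖ := lt_of_le_of_lt hS hw'
      have hdiff : 0 < ‖w‖ - S := by linarith
      set c : ℝ := (‖w‖ - S) / ‖w‖ with hc
      have hcpos : 0 < c := div_pos hdiff hnw
      have hy0 : c • w ≠ 0 := smul_ne_zero (ne_of_gt hcpos) (norm_pos_iff.mp hnw)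
      have hnorm : ‖c • w‖ = ‖w‖ - S := by
        rw [norm_smul, Real.norm_eq_abs, abs_of_pos hcpos, hc,
          div_mul_cancel₀ _ (ne_of_gt hnw)]
      refine ⟨c • w, hy0, ?_⟩
      show ((S + ‖c • w‖) * ‖c • w‖⁻¹) • (c • w) = w
      rw [hnorm, smul_smul]
      have hone : (S + (‖w‖ - S)) * (‖w‖ - S)⁻¹ * c = 1 := by
        have h1 : S + (‖w‖ - S) = ‖w‖ := by ring
        have ha : ‖w‖ ≠ 0 := ne_of_gt hnw
        have hb : ‖w‖ - S ≠ 0 := ne_of_gt hdiff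
        rw [h1, hc, div_eq_mul_inv]
        calc ‖w‖ * (‖w‖ - S)⁻¹ * ((‖w‖ - S) * ‖w‖⁻¹)
            = (‖w‖ * ‖w‖⁻¹) * ((‖w‖ - S)⁻¹ * (‖w‖ - S)) := by ring
          _ = 1 := by rw [mul_inv_cancel₀ ha, inv_mul_cancel₀ hb, mul_one]
      rw [hone, one_smul]
  rw [himg] at C
  exact C.isConnected.isPreconnected

/-! ### The crossing lemma -/

lemma crossing {g : ℂ → ℂ} (hgd : Differentiable ℂ g) (hgn : Noncst g)
    {O : Set ℂ} (hOo : IsOpen O) (hOb : Bornology.IsBounded O)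
    {Γ : ℝ → ℂ} (hΓc : ContinuousOn Γ (Set.Ici 0))
    (hΓi : Filter.Tendsto (fun t => ‖Γ t‖) Filter.atTop Filter.atTop)
    (hw0 : Γ 0 ∈ g '' closure O) :
    ∃ t : ℝ, 0 ≤ t ∧ Γ t ∈ g '' frontier O := by
  by_contra hno
  push_neg at hno
  have hKc : IsCompact (closure O) :=
    Metric.isCompact_of_isClosed_isBounded isClosed_closure hOb.closure
  set T := g '' frontier O with hT
  set GK := g '' closure O with hGK
  have hGKc : IsCompact GK := hKc.image hgd.continuous
  have hTGK : T ⊆ GK := Set.image_mono frontier_subset_closure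
  have hfrGK : frontier GK ⊆ T := by
    intro x hx
    have hxK : x ∈ GK := by
      have h2 : x ∈ closure GK := frontier_subset_closure hx
      rwa [hGKc.isClosed.closure_eq] at h2
    obtain ⟨z, hzK, hgzx⟩ := hxK
    by_cases hzfr : ∃ z' ∈ frontier O, g z' = x
    · obtain ⟨z', h1, h2⟩ := hzfr
      exact ⟨z', h1, h2⟩
    · exfalso
      push_neg at hzfr
      have hzO : z ∈ O := by
        have h1 : z ∈ O ∪ frontier O := by
          have h2 : closure O = O ∪ frontier O := closure_eq_self_union_frontier O
          rw [← h2]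
          exact hzK
        rcases h1 with h | h
        · exact h
        · exact absurd hgzx (hzfr z h)
      have hmem : GK ∈ 𝓝 x := by
        rw [← hgzx]
        apply nhds_le_map_nhds hgd hgn z
        rw [Filter.mem_map]
        apply Filter.mem_of_superset (hOo.mem_nhds hzO)
        intro y hy
        exact Set.mem_preimage.mpr ⟨y, subset_closure hy, rfl⟩
      exact hx.2 (mem_interior_iff_mem_nhds.mpr hmem)
  obtain ⟨S₀, hS₀⟩ := isBounded_iff_forall_norm_le.mp hGKc.isBounded
  set S := max S₀ 0 with hSdef
  have hS0 : (0:ℝ) ≤ S := le_max_right _ _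
  have hS₀' : ∀ x ∈ GK, ‖x‖ ≤ S := fun x hx => by
    exact le_trans (hS₀ x hx) (le_max_left _ _)
  obtain ⟨t₁, ht₁0, ht₁⟩ : ∃ t₁ : ℝ, 0 ≤ t₁ ∧ S < ‖Γ t₁‖ := by
    obtain ⟨t₁, h⟩ :=
      ((hΓi.eventually_gt_atTop S).and (Filter.eventually_ge_atTop (0:ℝ))).exists
    exact ⟨t₁, h.2, h.1⟩
  set P := Γ '' Set.Icc 0 t₁ with hP
  have hPc : IsPreconnected P :=
    isPreconnected_Icc.image Γ (hΓc.mono (Set.Icc_subset_Ici_self))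
  have h0P : Γ 0 ∈ P := ⟨0, ⟨le_refl 0, ht₁0⟩, rfl⟩
  have ht₁P : Γ t₁ ∈ P := ⟨t₁, ⟨ht₁0, le_refl t₁⟩, rfl⟩
  set W := {z : ℂ | S < ‖z‖} with hW
  have ht₁W : Γ t₁ ∈ W := ht₁
  set Q := P ∪ W with hQ
  have hQc : IsPreconnected Q :=
    IsPreconnected.union (Γ t₁) ht₁P ht₁W hPc (preconnected_large hS0)
  have hQT : ∀ x ∈ Q, x ∉ T := by
    rintro x hx hxT
    rcases hx with ⟨t, ht, rfl⟩ | hx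
    · exact hno t ht.1 hxT
    · have := hS₀' x (hTGK hxT)
      have hx' : S < ‖x‖ := hx
      linarith
  have hQuv : Q ⊆ interior GK ∪ GKᶜ := by
    intro x hx
    by_cases hxGK : x ∈ GK
    · left
      by_cases hxi : x ∈ interior GK
      · exact hxi
      · exact absurd (hfrGK ⟨subset_closure hxGK, hxi⟩) (hQT x hx)
    · right
      exact hxGK
  have h1 : (Q ∩ interior GK).Nonempty := by
    refine ⟨Γ 0, Or.inl h0P, ?_⟩
    by_cases hxi : Γ 0 ∈ interior GK
    · exact hxi
    · exact absurd (hfrGK ⟨subset_closure hw0, hxi⟩) (hQT _ (Or.inl h0P))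
  have h2 : (Q ∩ GKᶜ).Nonempty := by
    refine ⟨Γ t₁, Or.inr ht₁W, fun hmem => ?_⟩
    have := hS₀' _ hmem
    have hx' : S < ‖Γ t₁‖ := ht₁
    linarith
  obtain ⟨y, hy⟩ := hQc (interior GK) GKᶜ isOpen_interior hGKc.isClosed.isOpen_compl hQuv h1 h2
  exact hy.2.2 (interior_subset hy.2.1)

end Stmt2Aux

namespace Stmt2Aux

/-! ### Normality on the filled region -/

lemma normal_on_O {f : ℕ → ℂ → ℂ} (hf : ∀ i, TranscendentalEntire (f i))
    {Γ : ℝ → ℂ} (hΓc : ContinuousOn Γ (Set.Ici 0))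
    (hΓi : Filter.Tendsto (fun t => ‖Γ t‖) Filter.atTop Filter.atTop)
    {M₀ : ℝ} (hM₀ : ∀ t ∈ Set.Ici (0:ℝ), ‖f 0 (Γ t)‖ ≤ M₀)
    {V : Set ℂ} (hV : IsOpen V) (hVc : IsPreconnected V)
    (hVf : V ⊆ fatou (semigroupGen (Set.range f)))
    {O : Set ℂ} (hOo : IsOpen O) (hOb : Bornology.IsBounded O)
    (hfrV : frontier O ⊆ V) :
    NormalOn (semigroupGen (Set.range f)) O := by
  intro s hs
  have hGmem := mem_semigroupGen_prop hf
  have hsd : ∀ n, Differentiable ℂ (s n) := fun n => (hGmem _ (hs n)).1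
  have hfrC : IsCompact (frontier O) := frontier_compact hOb
  by_cases hcase : ∃ x ∈ V, Bnd s x
  · obtain ⟨x₀, hx₀, hb⟩ := hcase
    obtain ⟨φ, hφ, H, hTU⟩ := unif_conv hV hVc hVf hs hx₀ hb hfrC hfrV
    obtain ⟨H', hTU'⟩ := extend_uniform hOb (fun n => hsd (φ n)) hTU
    exact ⟨φ, hφ, Or.inl ⟨H', (hTU'.mono subset_closure).tendstoLocallyUniformlyOn⟩⟩
  · push_neg at hcase
    have hdiv : ∀ x ∈ V, Divg s x := fun x hx => divg_of_not_bnd (hcase x hx)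
    have hFr : ∀ M : ℝ, ∀ᶠ n in Filter.atTop, ∀ z ∈ frontier O, M ≤ ‖s n z‖ :=
      fun M => unif_divg hV hVf hs hdiv hfrC hfrV M
    by_cases hz : ∃ᶠ n in Filter.atTop, ∃ p ∈ closure O, s n p = 0
    · exfalso
      obtain ⟨ζ, hζ, hζz⟩ := Filter.extraction_of_frequently_atTop hz
      set s' : ℕ → ℂ → ℂ := fun n => (f 0) ∘ (s (ζ n)) with hs'def
      have hs' : ∀ n, s' n ∈ semigroupGen (Set.range f) := fun n =>
        InSemigroup.comp (InSemigroup.base ⟨0, rfl⟩) (hs (ζ n))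
      by_cases hcase' : ∃ x ∈ V, Bnd s' x
      · obtain ⟨x₁, hx₁, hb'⟩ := hcase'
        obtain ⟨ψ, hψ, H, hTU⟩ := unif_conv hV hVc hVf hs' hx₁ hb' hfrC hfrV
        obtain ⟨C, hC⟩ := maxmod_bound hOb (fun n => (hGmem _ (hs' (ψ n))).1) hTU
        obtain ⟨w₀, hw₀⟩ := exists_large_value (hf 0) C
        have habs : (0:ℝ) ≤ ‖w₀‖ := norm_nonneg w₀
        have hev2 : ∀ᶠ n in Filter.atTop, ∀ z ∈ frontier O,
            2 * ‖w₀‖ + 1 ≤ ‖s (ζ (ψ n)) z‖ :=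
          ((hζ.comp hψ).tendsto_atTop).eventually (hFr (2 * ‖w₀‖ + 1))
        obtain ⟨n, hn1, hn2⟩ := (hev2.and hC).exists
        obtain ⟨p, hp, hp0⟩ := hζz (ψ n)
        obtain ⟨q, hq, hqw⟩ := cover_disk (hsd (ζ (ψ n))) hOb
          (show (0:ℝ) < 2 * ‖w₀‖ + 1 by linarith) hn1 hp hp0
          (show ‖w₀‖ < (2 * ‖w₀‖ + 1) / 2 by linarith)
        have h3 := hn2 q hq
        have h4 : ‖s' (ψ n) q‖ = ‖f 0 w₀‖ := by
          simp only [hs'def, Function.comp_apply, hqw]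
        rw [h4] at h3
        linarith
      · push_neg at hcase'
        have hdiv' : ∀ x ∈ V, Divg s' x := fun x hx => divg_of_not_bnd (hcase' x hx)
        have hFr' := unif_divg hV hVf hs' hdiv' hfrC hfrV (M₀ + 1)
        set R : ℝ := 2 * ‖Γ 0‖ + 1 with hRdef
        have habs : (0:ℝ) ≤ ‖Γ 0‖ := norm_nonneg _
        have hR : (0:ℝ) < R := by rw [hRdef]; linarith
        have hev2 : ∀ᶠ n in Filter.atTop, ∀ z ∈ frontier O, R ≤ ‖s (ζ n) z‖ :=
          (hζ.tendsto_atTop).eventually (hFr R)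
        obtain ⟨n, hn2, hn1⟩ := (hFr'.and hev2).exists
        obtain ⟨p, hp, hp0⟩ := hζz n
        have hΓ0lt : ‖Γ 0‖ < R / 2 := by rw [hRdef]; linarith
        obtain ⟨q, hq, hqw⟩ := cover_disk (hsd (ζ n)) hOb hR hn1 hp hp0 hΓ0lt
        have hΓ0mem : Γ 0 ∈ s (ζ n) '' closure O := ⟨q, hq, hqw⟩
        obtain ⟨t, ht0, htmem⟩ :=
          crossing (hsd (ζ n)) (hGmem _ (hs (ζ n))).2 hOo hOb hΓc hΓi hΓ0mem
        obtain ⟨z', hz', hgz'⟩ := htmem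
        have h1 := hn2 z' hz'
        have h2 : ‖s' n z'‖ = ‖f 0 (Γ t)‖ := by
          simp only [hs'def, Function.comp_apply, hgz']
        rw [h2] at h1
        have h3 := hM₀ t ht0
        linarith
    · rw [Filter.not_frequently] at hz
      refine ⟨id, strictMono_id, Or.inr ?_⟩
      intro K hKO hKc M
      refine ((hFr (max M 1)).and hz).mono fun n hn => ?_
      obtain ⟨h1, h2⟩ := hn
      push_neg at h2
      intro z hzK
      have hM1 : (0:ℝ) < max M 1 := lt_of_lt_of_le one_pos (le_max_right M 1)
      have hd : DiffContOnCl ℂ (fun w => (s n w)⁻¹) O := by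
        refine ⟨DifferentiableOn.inv ((hsd n).differentiableOn)
          (fun w hw => h2 w (subset_closure hw)), ?_⟩
        exact ContinuousOn.inv₀ ((hsd n).continuous.continuousOn) (fun w hw => h2 w hw)
      have hbd : ∀ w ∈ frontier O, ‖(s n w)⁻¹‖ ≤ (max M 1)⁻¹ := by
        intro w hw
        rw [norm_inv]
        exact inv_anti₀ hM1 (h1 w hw)
      have hmax := Complex.norm_le_of_forall_mem_frontier_norm_le hOb hd hbd
        (subset_closure (hKO hzK))
      rw [norm_inv] at hmax
      have hzne : s n z ≠ 0 := h2 z (subset_closure (hKO hzK))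
      have hzpos : 0 < ‖s n z‖ := norm_pos_iff.mpr hzne
      have h5 := (inv_le_inv₀ hzpos hM1).mp hmax
      exact le_trans (le_max_left M 1) h5

end Stmt2Aux

namespace Stmt2Aux

/-! ### Constructing the surrounding open set (Šura-Bura argument) -/

lemma exists_O {V : Set ℂ} (hV : IsOpen V) {x : ℂ} (hx : x ∉ V)
    (hD : Bornology.IsBounded (connectedComponentIn Vᶜ x)) :
    ∃ O : Set ℂ, IsOpen O ∧ Bornology.IsBounded O ∧
      connectedComponentIn Vᶜ x ⊆ O ∧ frontier O ⊆ V := by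
  set C := Vᶜ with hC
  have hCc : IsClosed C := hV.isClosed_compl
  set D := connectedComponentIn C x with hDdef
  have hxC : x ∈ C := hx
  have hxD : x ∈ D := mem_connectedComponentIn hxC
  have hDsub : D ⊆ C := connectedComponentIn_subset C x
  obtain ⟨ρ, hρ⟩ := isBounded_iff_forall_norm_le.mp hD
  have hρ0 : (0:ℝ) ≤ ρ := le_trans (norm_nonneg x) (hρ x hxD)
  set R := ρ + 2 with hR
  set C' := C ∩ Metric.closedBall 0 R with hC'
  have hC'c : IsCompact C' := Metric.isCompact_of_isClosed_isBounded
    (hCc.inter Metric.isClosed_closedBall)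
    (Metric.isBounded_closedBall.subset Set.inter_subset_right)
  have hDC' : D ⊆ C' := by
    intro y hy
    refine ⟨hDsub hy, ?_⟩
    rw [Metric.mem_closedBall, dist_zero_right]
    have := hρ y hy
    linarith
  have hxC' : x ∈ C' := hDC' hxD
  have hDC'eq : connectedComponentIn C' x = D := by
    apply Set.Subset.antisymm
    · exact (isPreconnected_connectedComponentIn).subset_connectedComponentIn
        (mem_connectedComponentIn hxC')
        ((connectedComponentIn_subset C' x).trans Set.inter_subset_left)
    · exact (isPreconnected_connectedComponentIn).subset_connectedComponentIn
        (mem_connectedComponentIn hxC) hDC'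
  haveI : CompactSpace C' := isCompact_iff_compactSpace.mp hC'c
  set x' : C' := ⟨x, hxC'⟩ with hx'
  have hDim : (Subtype.val '' connectedComponent x') = D := by
    rw [← hDC'eq, connectedComponentIn_eq_image hxC']
  set N : Set C' := Subtype.val ⁻¹' (Metric.ball (0:ℂ) (R - 1)) with hN
  have hNo : IsOpen N := (Metric.isOpen_ball).preimage continuous_subtype_val
  have hcompN : connectedComponent x' ⊆ N := by
    intro y hy
    have hyD : (y : ℂ) ∈ D := by
      rw [← hDim]
      exact ⟨y, hy, rfl⟩
    have h1 := hρ y hyD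
    simp only [hN, Set.mem_preimage, Metric.mem_ball, dist_zero_right]
    rw [hR]
    linarith
  have hSB := connectedComponent_eq_iInter_isClopen x'
  have hempty : (Nᶜ ∩ ⋂ (Z : {Z : Set C' // IsClopen Z ∧ x' ∈ Z}), (Z : Set C')) = ∅ := by
    rw [← hSB]
    apply Set.eq_empty_iff_forall_notMem.mpr
    rintro y ⟨h1, h2⟩
    exact h1 (hcompN h2)
  obtain ⟨t, htemp⟩ := (hNo.isClosed_compl.isCompact).elim_finite_subfamily_closed _
    (fun Z => Z.2.1.1) hempty
  set Z₀ : Set C' := ⋂ Z ∈ t, (Z : Set C') with hZ₀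
  have hZ₀clopen : IsClopen Z₀ := isClopen_biInter_finset (fun Z _ => Z.2.1)
  have hxZ₀ : x' ∈ Z₀ := Set.mem_iInter₂.mpr fun Z _ => Z.2.2
  have hZ₀N : Z₀ ⊆ N := by
    intro y hy
    by_contra hyN
    exact Set.eq_empty_iff_forall_notMem.mp htemp y ⟨hyN, hy⟩
  have hcompZ₀ : connectedComponent x' ⊆ Z₀ := by
    rw [hSB]
    intro y hy
    exact Set.mem_iInter₂.mpr fun Z _ => (Set.mem_iInter.mp hy) Z
  set E := (Subtype.val '' Z₀ : Set ℂ) with hE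
  have hEc : IsCompact E := (hZ₀clopen.1.isCompact).image continuous_subtype_val
  have hDE : D ⊆ E := by
    rw [← hDim]
    exact Set.image_mono hcompZ₀
  have hEball : E ⊆ Metric.ball 0 (R - 1) := by
    rintro _ ⟨y, hy, rfl⟩
    exact hZ₀N hy
  have hEC : E ⊆ C := by
    rintro _ ⟨y, hy, rfl⟩
    exact y.2.1
  have hCEclosed : IsClosed (C \ E) := by
    apply isClosed_of_closure_subset
    intro y hy
    have hyC : y ∈ C := by
      have h1 := closure_mono (Set.diff_subset : C \ E ⊆ C) hy
      rwa [hCc.closure_eq] at h1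
    refine ⟨hyC, fun hyE => ?_⟩
    have hyball : y ∈ Metric.ball (0:ℂ) (R - 1) := hEball hyE
    have hyclosure : y ∈ closure ((C \ E) ∩ Metric.ball 0 (R - 1)) := by
      rw [mem_closure_iff] at hy ⊢
      intro o ho hyo
      obtain ⟨w, hw1, hw2⟩ := hy (o ∩ Metric.ball 0 (R - 1))
        (ho.inter Metric.isOpen_ball) ⟨hyo, hyball⟩
      exact ⟨w, hw1.1, hw2, hw1.2⟩
    have hA : IsClosed (Subtype.val '' (Z₀ᶜ) : Set ℂ) :=
      ((hZ₀clopen.compl.1.isCompact).image continuous_subtype_val).isClosed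
    have hsubA : (C \ E) ∩ Metric.ball 0 (R - 1) ⊆ Subtype.val '' (Z₀ᶜ) := by
      rintro w ⟨⟨hwC, hwE⟩, hwball⟩
      have hwC' : w ∈ C' := by
        refine ⟨hwC, ?_⟩
        rw [Metric.mem_closedBall, dist_zero_right]
        rw [Metric.mem_ball, dist_zero_right] at hwball
        linarith
      refine ⟨⟨w, hwC'⟩, fun hwZ => ?_, rfl⟩
      exact hwE ⟨⟨w, hwC'⟩, hwZ, rfl⟩
    have hyA : y ∈ Subtype.val '' (Z₀ᶜ) := by
      have h2 := closure_mono hsubA hyclosure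
      rwa [hA.closure_eq] at h2
    obtain ⟨w', hw', hww⟩ := hyA
    obtain ⟨w'', hw'', hww2⟩ := hyE
    have heq : w'' = w' := Subtype.val_injective (hww2.trans hww.symm)
    rw [heq] at hw''
    exact hw' hw''
  have hEopen : E ⊆ (C \ E)ᶜ := fun w hw hmem => hmem.2 hw
  obtain ⟨δ, hδ0, hδ⟩ := hEc.exists_thickening_subset_open hCEclosed.isOpen_compl hEopen
  refine ⟨Metric.thickening (δ / 2) E, Metric.isOpen_thickening, ?_, ?_, ?_⟩
  · have hsub : Metric.thickening (δ / 2) E ⊆ Metric.ball (0:ℂ) (R - 1 + δ) := by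
      intro w hw
      rw [Metric.mem_thickening_iff] at hw
      obtain ⟨z, hz, hdist⟩ := hw
      have hz' := hEball hz
      rw [Metric.mem_ball, dist_zero_right] at hz'
      rw [Metric.mem_ball, dist_zero_right]
      calc ‖w‖ = dist w 0 := (dist_zero_right w).symm
        _ ≤ dist w z + dist z 0 := dist_triangle _ _ _
        _ < R - 1 + δ := by
            rw [dist_zero_right]
            linarith
    exact Metric.isBounded_ball.subset hsub
  · exact fun y hy => Metric.self_subset_thickening (by linarith) E (hDE hy)
  · intro y hy
    by_contra hyV
    have hyC : y ∈ C := hyV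
    have hycth : y ∈ Metric.cthickening (δ / 2) E :=
      Metric.closure_thickening_subset_cthickening _ _ hy.1
    have hyth : y ∈ Metric.thickening δ E :=
      Metric.cthickening_subset_thickening' hδ0 (by linarith) E hycth
    by_cases hyE : y ∈ E
    · have hint : y ∈ interior (Metric.thickening (δ / 2) E) := by
        rw [Metric.isOpen_thickening.interior_eq]
        exact Metric.self_subset_thickening (by linarith) E hyE
      exact hy.2 hint
    · exact (hδ hyth) ⟨hyC, hyE⟩

/-! ### Frontier facts -/

lemma frontier_nonempty {O : Set ℂ} (hO : IsOpen O) (hne : O.Nonempty)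
    (hb : Bornology.IsBounded O) : (frontier O).Nonempty := by
  by_contra h
  rw [Set.not_nonempty_iff_eq_empty] at h
  have hclopen : IsClopen O := isClopen_iff_frontier_eq_empty.mpr h
  rcases isClopen_iff.mp hclopen with rfl | rfl
  · exact Set.not_nonempty_empty hne
  · obtain ⟨c, hc⟩ := isBounded_iff_forall_norm_le.mp hb
    have h0 : (0:ℝ) ≤ c := le_trans (norm_nonneg 0) (hc 0 trivial)
    have := hc ((c + 1 : ℝ) : ℂ) trivial
    rw [Complex.norm_real, Real.norm_eq_abs, abs_of_pos (by linarith)] at this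
    linarith

lemma frontier_cci_subset {O : Set ℂ} (hO : IsOpen O) (x : ℂ) :
    frontier (connectedComponentIn O x) ⊆ frontier O := by
  intro y hy
  have h1 : y ∈ closure O := closure_mono (connectedComponentIn_subset O x) hy.1
  refine ⟨h1, fun hyO => ?_⟩
  have hyO' : y ∈ O := by rwa [hO.interior_eq] at hyO
  have hcompo : IsOpen (connectedComponentIn O y) := hO.connectedComponentIn
  have hclos : y ∈ closure (connectedComponentIn O x) := hy.1
  rw [mem_closure_iff] at hclos
  obtain ⟨w, hw1, hw2⟩ := hclos (connectedComponentIn O y) hcompo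
    (mem_connectedComponentIn hyO')
  have heq : connectedComponentIn O y = connectedComponentIn O x :=
    (connectedComponentIn_eq hw1).trans (connectedComponentIn_eq hw2).symm
  have hyin : y ∈ connectedComponentIn O x := heq ▸ mem_connectedComponentIn hyO'
  have hopen : IsOpen (connectedComponentIn O x) := hO.connectedComponentIn
  exact (hy.2) (by rwa [hopen.interior_eq])

end Stmt2Aux

namespace Stmt2Aux
open scoped OnePoint

/-! ### Complement connectivity in the one-point compactification -/

lemma connected_compl (V : Set ℂ) (hVo : IsOpen V)
    (hcomp : ∀ x ∉ V, ¬ Bornology.IsBounded (connectedComponentIn Vᶜ x)) :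
    IsConnected ((fun z : ℂ => (z : OnePoint ℂ)) '' V)ᶜ := by
  set S := (fun z : ℂ => (z : OnePoint ℂ)) '' V with hS
  have hinfty : (∞ : OnePoint ℂ) ∈ Sᶜ := by
    rintro ⟨z, hz, hzeq⟩
    exact (OnePoint.coe_ne_infty z) hzeq
  have hSc : Sᶜ = {(∞ : OnePoint ℂ)} ∪ (fun z : ℂ => (z : OnePoint ℂ)) '' (Vᶜ) := by
    ext w
    induction w using OnePoint.rec with
    | infty =>
      exact ⟨fun _ => Set.mem_union_left _ rfl, fun _ => hinfty⟩
    | coe z =>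
      simp only [Set.mem_compl_iff, Set.mem_union, Set.mem_singleton_iff]
      constructor
      · intro hz
        refine Or.inr ⟨z, fun hzV => hz ⟨z, hzV, rfl⟩, rfl⟩
      · rintro (h | ⟨z', hz', hzeq⟩)
        · exact absurd h (OnePoint.coe_ne_infty z)
        · have : z' = z := OnePoint.coe_injective hzeq
          rw [this] at hz'
          rintro ⟨z'', hz'', hzeq2⟩
          have : z'' = z := OnePoint.coe_injective hzeq2
          rw [this] at hz''
          exact hz' hz''
  refine ⟨⟨∞, hinfty⟩, ?_⟩
  by_cases hVuniv : Vᶜ = ∅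
  · have h1 : Sᶜ = {(∞ : OnePoint ℂ)} := by
      rw [hSc, hVuniv]
      simp
    rw [h1]
    exact isPreconnected_singleton
  · obtain ⟨x₀, hx₀⟩ := Set.nonempty_iff_ne_empty.mpr hVuniv
    set piece : ℂ → Set (OnePoint ℂ) := fun x =>
      insert (∞ : OnePoint ℂ) ((fun z : ℂ => (z : OnePoint ℂ)) '' connectedComponentIn Vᶜ x)
      with hpiece
    have hpiece_pre : ∀ x ∈ Vᶜ, IsPreconnected (piece x) := by
      intro x hx
      have h1 : IsPreconnected
          ((fun z : ℂ => (z : OnePoint ℂ)) '' connectedComponentIn Vᶜ x) :=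
        (isPreconnected_connectedComponentIn).image _
          (OnePoint.continuous_coe.continuousOn)
      have h2 : (∞ : OnePoint ℂ) ∈
          closure ((fun z : ℂ => (z : OnePoint ℂ)) '' connectedComponentIn Vᶜ x) := by
        rw [mem_closure_iff]
        intro o ho hinf
        have hKc : IsCompact (((fun z : ℂ => (z : OnePoint ℂ)) ⁻¹' o : Set ℂ)ᶜ) :=
          ((OnePoint.isOpen_iff_of_mem hinf).mp ho).2
        have hKb : Bornology.IsBounded (((fun z : ℂ => (z : OnePoint ℂ)) ⁻¹' o : Set ℂ)ᶜ) :=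
          hKc.isBounded
        have hunb := hcomp x hx
        have : ¬ (connectedComponentIn Vᶜ x ⊆
            ((fun z : ℂ => (z : OnePoint ℂ)) ⁻¹' o : Set ℂ)ᶜ) := by
          intro hsub
          exact hunb (hKb.subset hsub)
        obtain ⟨d, hd1, hd2⟩ := Set.not_subset.mp this
        rw [Set.notMem_compl_iff] at hd2
        exact ⟨(d : OnePoint ℂ), hd2, ⟨d, hd1, rfl⟩⟩
      have h3 : piece x ⊆
          closure ((fun z : ℂ => (z : OnePoint ℂ)) '' connectedComponentIn Vᶜ x) := by
        rw [hpiece]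
        exact Set.insert_subset h2 subset_closure
      exact h1.subset_closure (Set.subset_insert _ _) h3
    have hunion : Sᶜ = ⋃₀ (piece '' Vᶜ) := by
      rw [hSc]
      ext w
      constructor
      · rintro (hw | ⟨z, hz, rfl⟩)
        · rw [Set.mem_singleton_iff] at hw
          subst hw
          exact ⟨piece x₀, ⟨x₀, hx₀, rfl⟩, Set.mem_insert _ _⟩
        · exact ⟨piece z, ⟨z, hz, rfl⟩,
            Set.mem_insert_of_mem _ ⟨z, mem_connectedComponentIn hz, rfl⟩⟩
      · rintro ⟨_, ⟨x, hx, rfl⟩, hw⟩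
        rcases Set.mem_insert_iff.mp hw with rfl | ⟨z, hz, rfl⟩
        · exact Or.inl rfl
        · exact Or.inr ⟨z, connectedComponentIn_subset _ _ hz, rfl⟩
    rw [hunion]
    apply isPreconnected_sUnion (∞ : OnePoint ℂ)
    · rintro _ ⟨x, hx, rfl⟩
      exact Set.mem_insert _ _
    · rintro _ ⟨x, hx, rfl⟩
      exact hpiece_pre x hx

end Stmt2Aux

/-- if `G = [f₁, f₂, …]` is a transcendental semigroup bounded on some
curve `Γ` going to `∞` (every generator is bounded on `Γ`), then every connected
component of `F(G)` is simply connected. -/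
theorem stmt2 (f : ℕ → ℂ → ℂ) (hf : ∀ i, TranscendentalEntire (f i))
    (Γ : ℝ → ℂ) (hΓcont : ContinuousOn Γ (Ici 0))
    (hΓinf : Tendsto (fun t => ‖Γ t‖) atTop atTop)
    (hbd : ∀ i, ∃ M : ℝ, ∀ t ∈ Ici (0:ℝ), ‖f i (Γ t)‖ ≤ M) :
    ∀ V, IsComponentOf V (fatou (semigroupGen (Set.range f))) →
      SimplyConnectedDomain V := by
  rintro V ⟨z₀, hz₀, rfl⟩
  set G := semigroupGen (Set.range f) with hG
  have hfop : IsOpen (fatou G) := Stmt2Aux.fatou_isOpen G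
  have hVo : IsOpen (connectedComponentIn (fatou G) z₀) := hfop.connectedComponentIn
  have hVc : IsPreconnected (connectedComponentIn (fatou G) z₀) :=
    isPreconnected_connectedComponentIn
  have hVf : connectedComponentIn (fatou G) z₀ ⊆ fatou G := connectedComponentIn_subset _ _
  have hz₀V : z₀ ∈ connectedComponentIn (fatou G) z₀ := mem_connectedComponentIn hz₀
  obtain ⟨M₀, hM₀⟩ := hbd 0
  show IsConnected ((fun z : ℂ => (z : OnePoint ℂ)) '' connectedComponentIn (fatou G) z₀)ᶜ
  apply Stmt2Aux.connected_compl _ hVo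
  intro x hxV hDb
  obtain ⟨O, hOo, hOb, hDO, hfrO⟩ := Stmt2Aux.exists_O hVo hxV hDb
  have hN : NormalOn G O :=
    Stmt2Aux.normal_on_O hf hΓcont hΓinf hM₀ hVo hVc hVf hOo hOb hfrO
  have hOf : O ⊆ fatou G := fun y hy => ⟨O, hOo, hy, hN⟩
  have hxO : x ∈ O := hDO (mem_connectedComponentIn hxV)
  set O₀ := connectedComponentIn O x with hO₀
  have hO₀o : IsOpen O₀ := hOo.connectedComponentIn
  have hxO₀ : x ∈ O₀ := mem_connectedComponentIn hxO
  have hO₀b : Bornology.IsBounded O₀ := hOb.subset (connectedComponentIn_subset _ _)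
  obtain ⟨q, hq⟩ := Stmt2Aux.frontier_nonempty hO₀o ⟨x, hxO₀⟩ hO₀b
  have hqV : q ∈ connectedComponentIn (fatou G) z₀ :=
    hfrO (Stmt2Aux.frontier_cci_subset hOo x hq)
  have hq' : (O₀ ∩ connectedComponentIn (fatou G) z₀).Nonempty := by
    have hqc : q ∈ closure O₀ := hq.1
    rw [mem_closure_iff] at hqc
    obtain ⟨w, hw1, hw2⟩ := hqc _ hVo hqV
    exact ⟨w, hw2, hw1⟩
  have hpre : IsPreconnected (O₀ ∪ connectedComponentIn (fatou G) z₀) :=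
    IsPreconnected.union' hq' isPreconnected_connectedComponentIn hVc
  have hsub : O₀ ∪ connectedComponentIn (fatou G) z₀ ⊆ fatou G :=
    Set.union_subset ((connectedComponentIn_subset _ _).trans hOf) hVf
  have hVmax : O₀ ∪ connectedComponentIn (fatou G) z₀ ⊆ connectedComponentIn (fatou G) z₀ :=
    hpre.subset_connectedComponentIn (Or.inr hz₀V) hsub
  exact hxV (hVmax (Or.inl hxO₀))
end
end

section
/- Let G be a transcendental semigroup. Then F(G) does not contain Herman rings: there is no connected component U of F(G) together with an element g ∈ G satisfying g(U) ⊆ U such that U is contained in a Herman ring of g, i.e., in a periodic component V of F(g) of some period p on which g^p is conformally conjugate to an irrational rotation of an annulus. -/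
open Set Filter Topology

noncomputable section


open MeasureTheory intervalIntegral

/-- `V` is a Herman ring of `g`: a periodic component of `F(g)` of some period `p`
on which `g^[p]` is conformally conjugate to an irrational rotation of an annulus. -/
def IsHermanRingOf (g : ℂ → ℂ) (V : Set ℂ) : Prop :=
  IsComponentOf V (fatouFn g) ∧
    ∃ p : ℕ, 0 < p ∧ g^[p] '' V ⊆ V ∧
      ∃ (ψ : ℂ → ℂ) (r R α : ℝ), 0 < r ∧ r < R ∧ Irrational α ∧
        DifferentiableOn ℂ ψ V ∧ InjOn ψ V ∧
        ψ '' V = {z : ℂ | r < ‖z‖ ∧ ‖z‖ < R} ∧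
        ∀ z ∈ V, ψ (g^[p] z) =
          Complex.exp (2 * Real.pi * α * Complex.I) * ψ z


lemma subset_fatou {F : Set (ℂ → ℂ)} {W : Set ℂ} (hW : IsOpen W) (hN : NormalOn F W) :
    W ⊆ fatou F := fun z hz => ⟨W, hW, hz, hN⟩

lemma isOpen_fatou (F : Set (ℂ → ℂ)) : IsOpen (fatou F) := by
  rw [isOpen_iff_mem_nhds]
  rintro z ⟨U, hU, hzU, hN⟩
  exact Filter.mem_of_superset (hU.mem_nhds hzU) (subset_fatou hU hN)

/-- frontier of a connected component of an open set does not meet the set. -/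
lemma frontier_connectedComponentIn_disjoint {O : Set ℂ} (hO : IsOpen O) (x : ℂ) :
    frontier (connectedComponentIn O x) ∩ O = ∅ := by
  by_contra h
  rw [← Ne, ← nonempty_iff_ne_empty] at h
  obtain ⟨y, hyf, hyO⟩ := h
  have hopen : IsOpen (connectedComponentIn O y) := hO.connectedComponentIn
  have hy' : y ∈ connectedComponentIn O y := mem_connectedComponentIn hyO
  have : (connectedComponentIn O y ∩ connectedComponentIn O x).Nonempty := by
    have := hyf.1
    rw [mem_closure_iff] at this
    exact this _ hopen hy'
  obtain ⟨w, hw1, hw2⟩ := this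
  have : connectedComponentIn O x = connectedComponentIn O y := by
    rw [connectedComponentIn_eq hw2, connectedComponentIn_eq hw1]
  have hyx : y ∈ connectedComponentIn O x := this ▸ hy'
  have hxopen : IsOpen (connectedComponentIn O x) := hO.connectedComponentIn
  exact hyf.2 (by rwa [hxopen.interior_eq])




/-- The set of complex numbers of norm `> M` is preconnected (`M ≥ 0`). -/
lemma isPreconnected_far {M : ℝ} (hM : 0 ≤ M) : IsPreconnected {z : ℂ | M < ‖z‖} := by
  have hrank : (1 : Cardinal) < Module.rank ℝ ℂ := by
    rw [Complex.rank_real_complex]; norm_num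
  have hsph : IsConnected (Metric.sphere (0 : ℂ) 1) := isConnected_sphere hrank 0 zero_le_one
  have hIoi : IsConnected (Ioi M) := isConnected_Ioi
  have hprod : IsConnected ((Ioi M) ×ˢ (Metric.sphere (0:ℂ) 1)) := hIoi.prod hsph
  have hmap : ContinuousOn (fun p : ℝ × ℂ => (p.1 : ℂ) * p.2) ((Ioi M) ×ˢ (Metric.sphere (0:ℂ) 1)) :=
    (Continuous.mul (by continuity) continuous_snd).continuousOn
  have himg : (fun p : ℝ × ℂ => (p.1 : ℂ) * p.2) '' ((Ioi M) ×ˢ (Metric.sphere (0:ℂ) 1))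
      = {z : ℂ | M < ‖z‖} := by
    ext z
    constructor
    · rintro ⟨⟨t, v⟩, ⟨ht, hv⟩, rfl⟩
      have hv1 : ‖v‖ = 1 := by simpa using hv
      have ht' : (0:ℝ) ≤ t := le_of_lt (lt_of_le_of_lt hM ht)
      simp only [mem_setOf_eq, norm_mul, Complex.norm_real, hv1, mul_one,
        Real.norm_eq_abs, abs_of_nonneg ht']
      exact ht
    · intro hz
      have hz0 : z ≠ 0 := by
        intro h; rw [h] at hz; simp at hz; exact absurd hz (not_lt.2 hM)
      refine ⟨(‖z‖, (‖z‖ : ℂ)⁻¹ * z), ⟨hz, ?_⟩, ?_⟩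
      · have : ‖z‖ ≠ 0 := by simpa using hz0
        simp [norm_inv, norm_mul, inv_mul_cancel₀ this]
      · have : ((‖z‖ : ℝ) : ℂ) ≠ 0 := by
          simpa [Complex.ofReal_eq_zero] using hz0
        field_simp
  rw [← himg]
  exact (hprod.image _ hmap).isPreconnected




/-- An injective holomorphic function on an open set has nonvanishing derivative. -/
lemma deriv_ne_zero_of_injOn {V : Set ℂ} (hVo : IsOpen V) {ψ : ℂ → ℂ}
    (hd : DifferentiableOn ℂ ψ V) (hinj : Set.InjOn ψ V) {z₀ : ℂ} (hz₀ : z₀ ∈ V) :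
    deriv ψ z₀ ≠ 0 := by
  intro hder
  have han : AnalyticOnNhd ℂ ψ V := hd.analyticOnNhd hVo
  have hψa : AnalyticAt ℂ ψ z₀ := han z₀ hz₀
  set f : ℂ → ℂ := fun z => ψ z - ψ z₀ with hf
  have hfa : AnalyticAt ℂ f z₀ := hψa.sub analyticAt_const
  have hf0 : f z₀ = 0 := sub_self _
  -- the order of vanishing is finite
  have hne_top : analyticOrderAt f z₀ ≠ ⊤ := by
    intro htop
    rw [analyticOrderAt_eq_top] at htop
    obtain ⟨ε, hε, hball⟩ := Metric.eventually_nhds_iff.1 (htop.and (hVo.eventually_mem hz₀))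
    have hdd : dist (z₀ + ((ε/2 : ℝ) : ℂ)) z₀ < ε := by
      rw [dist_self_add_left, Complex.norm_real, Real.norm_eq_abs,
        abs_of_pos (half_pos hε)]
      linarith
    have h2 := hball hdd
    have hz1V : z₀ + (ε/2 : ℝ) ∈ V := h2.2
    have : ψ (z₀ + (ε/2 : ℝ)) = ψ z₀ := by
      have := h2.1; simpa [hf, sub_eq_zero] using this
    have := hinj hz1V hz₀ this
    have : (ε/2 : ℝ) = (0 : ℝ) := by
      have h' : (↑(ε/2) : ℂ) = 0 := by linear_combination this
      exact_mod_cast h'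
    linarith
  obtain ⟨k, hk⟩ := WithTop.ne_top_iff_exists.1 hne_top
  obtain ⟨u, hua, hu0, hev⟩ := (hfa.analyticOrderAt_eq_natCast (n := k)).1 hk.symm
  -- k ≠ 0
  have hk0 : k ≠ 0 := by
    intro h0
    rw [h0] at hev
    have := hev.self_of_nhds
    simp [hf0] at this
    exact hu0 this.symm
  -- k ≠ 1
  have hderf : deriv f z₀ = 0 := by
    have : deriv f z₀ = deriv ψ z₀ := by
      simp [hf, deriv_sub_const]
    rw [this, hder]
  have hk1 : k ≠ 1 := by
    intro h1
    rw [h1] at hev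
    have hD : HasDerivAt (fun z => (z - z₀) ^ 1 • u z) (u z₀) z₀ := by
      have h1' : HasDerivAt (fun z : ℂ => (z - z₀) ^ 1) 1 z₀ := by
        simpa using ((hasDerivAt_id z₀).sub_const z₀)
      have h2' : HasDerivAt u (deriv u z₀) z₀ := hua.differentiableAt.hasDerivAt
      have := h1'.mul h2'
      refine this.congr_deriv ?_
      simp
    have : deriv f z₀ = u z₀ := by
      rw [Filter.EventuallyEq.deriv_eq hev]
      exact hD.deriv
    exact hu0 (by rw [← this, hderf])
  have hk2 : 2 ≤ k := by omega
  -- build k-th root of u near z₀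
  set c := u z₀ with hc
  have hc0 : c ≠ 0 := hu0
  set d₀ : ℂ := Complex.exp (Complex.log c / k) with hd₀
  have hd₀0 : d₀ ≠ 0 := Complex.exp_ne_zero _
  have hkC : (k : ℂ) ≠ 0 := Nat.cast_ne_zero.2 hk0
  have hd₀k : d₀ ^ k = c := by
    rw [hd₀, ← Complex.exp_nat_mul, mul_div_cancel₀ _ hkC, Complex.exp_log hc0]
  set η : ℂ → ℂ := fun w => d₀ * Complex.exp (Complex.log (u w / c) / k) with hη
  have hηa : AnalyticAt ℂ η z₀ := by
    have h1 : AnalyticAt ℂ (fun w => u w / c) z₀ := hua.div analyticAt_const hc0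
    have hsp : u z₀ / c ∈ Complex.slitPlane := by
      rw [← hc, div_self hc0]; exact Complex.one_mem_slitPlane
    exact analyticAt_const.mul (((h1.clog hsp).div analyticAt_const hkC).cexp)
  have hηz₀ : η z₀ = d₀ := by
    simp [hη, ← hc, div_self hc0, Complex.log_one]
  have hηk : ∀ᶠ w in 𝓝 z₀, η w ^ k = u w := by
    have hu_ne : ∀ᶠ w in 𝓝 z₀, u w ≠ 0 :=
      hua.continuousAt.eventually_ne hu0
    filter_upwards [hu_ne] with w hw
    have : u w / c ≠ 0 := div_ne_zero hw hc0
    rw [hη]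
    simp only [mul_pow, hd₀k]
    rw [← Complex.exp_nat_mul, mul_div_cancel₀ _ hkC, Complex.exp_log this]
    field_simp
  set F : ℂ → ℂ := fun z => (z - z₀) * η z with hF
  have hFa : AnalyticAt ℂ F z₀ := ((analyticAt_id.sub analyticAt_const).mul hηa)
  have hfF : ∀ᶠ z in 𝓝 z₀, f z = F z ^ k := by
    filter_upwards [hev, hηk] with z h1 h2
    rw [h1, hF]
    simp only [mul_pow, smul_eq_mul, h2]
  -- choose a good ball
  have hev_all : ∀ᶠ z in 𝓝 z₀, AnalyticAt ℂ F z ∧ η z ≠ 0 ∧ f z = F z ^ k ∧ z ∈ V := by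
    refine (hFa.eventually_analyticAt.and ((hηa.continuousAt.eventually_ne
      (hηz₀ ▸ hd₀0)).and (hfF.and (hVo.eventually_mem hz₀))))
  obtain ⟨ε, hε, hball⟩ := Metric.eventually_nhds_iff.1 hev_all
  set B := Metric.ball z₀ ε with hB
  have hFan : AnalyticOnNhd ℂ F B := fun z hz => (hball hz).1
  rcases hFan.is_constant_or_isOpen (convex_ball _ _).isPreconnected with hconst | hopen
  · obtain ⟨w, hw⟩ := hconst
    have hw0 : w = 0 := by
      have := hw z₀ (Metric.mem_ball_self hε)
      simp [hF] at this; exact this.symm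
    have hz1 : z₀ + ((ε/2 : ℝ) : ℂ) ∈ B := by
      rw [hB, Metric.mem_ball, dist_self_add_left, Complex.norm_real, Real.norm_eq_abs,
        abs_of_pos (half_pos hε)]
      linarith
    have := hw _ hz1
    rw [hw0, hF] at this
    have hη1 : η (z₀ + (ε/2:ℝ)) ≠ 0 := (hball hz1).2.1
    simp only [add_sub_cancel_left, mul_eq_zero] at this
    rcases this with h | h
    · have : (ε/2 : ℝ) = 0 := by exact_mod_cast h
      linarith
    · exact hη1 h
  · have himg : IsOpen (F '' B) := hopen B (subset_refl _) Metric.isOpen_ball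
    have h0mem : (0 : ℂ) ∈ F '' B := ⟨z₀, Metric.mem_ball_self hε, by simp [hF]⟩
    obtain ⟨δ, hδ, hδsub⟩ := Metric.isOpen_iff.1 himg 0 h0mem
    set t : ℂ := ((δ/2 : ℝ) : ℂ) with ht
    have ht0 : t ≠ 0 := by
      simp [ht, Complex.ofReal_eq_zero]; linarith
    have htmem : t ∈ Metric.ball (0:ℂ) δ := by
      rw [Metric.mem_ball, dist_zero_right, ht, Complex.norm_real, Real.norm_eq_abs,
        abs_of_pos (half_pos hδ)]
      linarith
    set ζ : ℂ := Complex.exp (2 * Real.pi * Complex.I / k) with hζ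
    have hζ1 : ζ ≠ 1 := by
      rw [hζ]
      intro h
      rw [Complex.exp_eq_one_iff] at h
      obtain ⟨n, hn⟩ := h
      have h2πI : (2 * Real.pi * Complex.I : ℂ) ≠ 0 := by
        simp [Complex.I_ne_zero, Real.pi_ne_zero, Complex.ofReal_eq_zero]
      have h'' : (2 * (Real.pi:ℂ) * Complex.I) * (1 - (n:ℂ) * k) = 0 := by
        have hcg := congrArg (fun x => x * (k:ℂ)) hn
        rw [div_mul_cancel₀ _ hkC] at hcg
        linear_combination hcg
      have : (n : ℂ) * k = 1 := by
        rcases mul_eq_zero.1 h'' with h | h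
        · exact absurd h h2πI
        · linear_combination -h
      have : ((n * k : ℤ) : ℂ) = ((1:ℤ) : ℂ) := by push_cast; linear_combination this
      have hnk : (n * (k:ℤ)) = 1 := by exact_mod_cast this
      have : (k : ℤ) ≤ 1 := Int.le_of_dvd one_pos ⟨n, by rw [← hnk]; ring⟩
      omega
    have hζk : ζ ^ k = 1 := by
      rw [hζ, ← Complex.exp_nat_mul, mul_div_cancel₀ _ hkC, Complex.exp_two_pi_mul_I]
    have hζtmem : ζ * t ∈ Metric.ball (0:ℂ) δ := by
      have : ‖ζ‖ = 1 := by
        rw [hζ]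
        rw [Complex.norm_exp]
        have hrw : (2 * Real.pi * Complex.I / (k:ℂ)) = ((2 * Real.pi / k : ℝ) : ℂ) * Complex.I := by
          push_cast; ring
        rw [hrw]
        simp
      simpa [dist_eq_norm, map_mul, this] using htmem
    obtain ⟨z₁, hz₁B, hz₁⟩ := hδsub htmem
    obtain ⟨z₂, hz₂B, hz₂⟩ := hδsub hζtmem
    have hne : z₁ ≠ z₂ := by
      intro h
      rw [h, hz₂] at hz₁
      have : (ζ - 1) * t = 0 := by linear_combination hz₁
      rcases mul_eq_zero.1 this with h' | h'
      · exact hζ1 (by linear_combination h')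
      · exact ht0 h'
    have hfeq : f z₁ = f z₂ := by
      rw [(hball hz₁B).2.2.1, (hball hz₂B).2.2.1, hz₁, hz₂, mul_pow, hζk, one_mul]
    have : ψ z₁ = ψ z₂ := by
      have h' : ψ z₁ - ψ z₀ = ψ z₂ - ψ z₀ := hfeq
      exact sub_left_inj.1 h'
    exact hne (hinj (hball hz₁B).2.2.2 (hball hz₂B).2.2.2 this)




/-- A function with vanishing derivative on an open set is constant on preconnected subsets. -/
lemma const_on_of_hasDerivAt_zero {f : ℂ → ℂ} {S : Set ℂ} (hS : IsOpen S)
    (h : ∀ z ∈ S, HasDerivAt f 0 z) {W : Set ℂ} (hWS : W ⊆ S) (hW : IsPreconnected W)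
    {x y : ℂ} (hx : x ∈ W) (hy : y ∈ W) : f x = f y := by
  -- first: local constancy on balls contained in S
  have hball : ∀ z ∈ S, ∀ ε > 0, Metric.ball z ε ⊆ S → ∀ w ∈ Metric.ball z ε, f w = f z := by
    intro z hz ε hε hsub w hw
    refine (convex_ball z ε).is_const_of_fderivWithin_eq_zero
      (fun v hv => ((h v (hsub hv)).differentiableAt).differentiableWithinAt) ?_ hw
      (Metric.mem_ball_self hε)
    intro v hv
    rw [fderivWithin_of_isOpen Metric.isOpen_ball hv]
    have := (h v (hsub hv)).hasFDerivAt.fderiv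
    rw [this]
    exact ContinuousLinearMap.ext fun u => by simp
  have hloc : ∀ z ∈ S, ∀ᶠ w in 𝓝 z, f w = f z := by
    intro z hz
    obtain ⟨ε, hε, hsub⟩ := Metric.isOpen_iff.1 hS z hz
    exact Filter.eventually_of_mem (Metric.ball_mem_nhds z hε) (hball z hz ε hε hsub)
  -- clopen argument
  set O₁ := {z ∈ S | f z = f x} with hO₁
  set O₂ := {z ∈ S | f z ≠ f x} with hO₂
  have ho₁ : IsOpen O₁ := by
    rw [isOpen_iff_mem_nhds]
    rintro z ⟨hzS, hzf⟩
    filter_upwards [hloc z hzS, hS.eventually_mem hzS] with w hw hwS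
    exact ⟨hwS, hw.trans hzf⟩
  have ho₂ : IsOpen O₂ := by
    rw [isOpen_iff_mem_nhds]
    rintro z ⟨hzS, hzf⟩
    filter_upwards [hloc z hzS, hS.eventually_mem hzS] with w hw hwS
    exact ⟨hwS, hw ▸ hzf⟩
  by_contra hne
  have hcover : W ⊆ O₁ ∪ O₂ := fun z hz => by
    by_cases hc : f z = f x
    · exact Or.inl ⟨hWS hz, hc⟩
    · exact Or.inr ⟨hWS hz, hc⟩
  obtain ⟨z, hzW, hz₁, hz₂⟩ := hW O₁ O₂ ho₁ ho₂ hcover ⟨x, hx, hWS hx, rfl⟩ ⟨y, hy, hWS hy, fun hc => hne hc.symm⟩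
  exact hz₂.2 hz₁.2




/-- The winding-type integral `z ↦ ∮_{|w|=τ} σ'(w)/(σ(w)-z) dw` has zero derivative at any
point `z₀` off the curve `σ '' (sphere 0 τ)`. -/
lemma hasDerivAt_wind_zero {σ : ℂ → ℂ} {A : Set ℂ} (hA : IsOpen A)
    (hσd : DifferentiableOn ℂ σ A) (hσ'c : ContinuousOn (deriv σ) A)
    {τ : ℝ} (hτ : 0 < τ) (hsub : Metric.sphere (0:ℂ) τ ⊆ A) {z₀ : ℂ}
    (hz₀ : z₀ ∉ σ '' Metric.sphere (0:ℂ) τ) :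
    HasDerivAt (fun z => ∮ w in C(0, τ), deriv σ w / (σ w - z)) 0 z₀ := by
  have hσc : ContinuousOn σ A := hσd.continuousOn
  set c : ℝ → ℂ := circleMap 0 τ with hcdef
  have hcmem : ∀ θ, c θ ∈ Metric.sphere (0:ℂ) τ := fun θ => circleMap_mem_sphere _ hτ.le _
  have hcA : ∀ θ, c θ ∈ A := fun θ => hsub (hcmem θ)
  have hne : ∀ θ, σ (c θ) ≠ z₀ := fun θ h => hz₀ ⟨c θ, hcmem θ, h⟩
  -- the curve image is compact, so we get a positive distance
  set C : Set ℂ := σ '' Metric.sphere (0:ℂ) τ with hCdef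
  have hCcomp : IsCompact C := (isCompact_sphere 0 τ).image_of_continuousOn (hσc.mono hsub)
  have hCne : C.Nonempty := ⟨σ (c 0), c 0, hcmem 0, rfl⟩
  set δ : ℝ := Metric.infDist z₀ C with hδdef
  have hδ : 0 < δ := (hCcomp.isClosed.notMem_iff_infDist_pos hCne).1 hz₀
  have hfar : ∀ z ∈ Metric.ball z₀ (δ/2), ∀ θ : ℝ, δ/2 ≤ ‖σ (c θ) - z‖ := by
    intro z hz θ
    have h1 : δ ≤ dist z₀ (σ (c θ)) := Metric.infDist_le_dist_of_mem ⟨c θ, hcmem θ, rfl⟩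
    have h2 : dist z z₀ < δ/2 := hz
    have := dist_triangle z₀ z (σ (c θ))
    rw [dist_comm z₀ z] at this
    have : δ - δ/2 ≤ dist z (σ (c θ)) := by linarith
    rw [dist_eq_norm] at this
    calc δ/2 = δ - δ/2 := by ring
    _ ≤ ‖z - σ (c θ)‖ := this
    _ = ‖σ (c θ) - z‖ := by rw [norm_sub_rev]
  -- bound for the derivative of σ on the sphere
  obtain ⟨M₁, hM₁⟩ := (isCompact_sphere (0:ℂ) τ).exists_bound_of_continuousOn (hσ'c.mono hsub)
  have hM₁0 : 0 ≤ M₁ := le_trans (norm_nonneg _) (hM₁ _ (hcmem 0))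
  -- continuity facts
  have hcont_c : Continuous c := continuous_circleMap 0 τ
  have hcont_dc : Continuous (fun θ => deriv (circleMap 0 τ) θ) := by
    simp only [deriv_circleMap]
    exact (continuous_circleMap 0 τ).mul continuous_const
  have hcont_sc : Continuous (fun θ => σ (c θ)) :=
    hσc.comp_continuous hcont_c hcA
  have hcont_dsc : Continuous (fun θ => deriv σ (c θ)) :=
    hσ'c.comp_continuous hcont_c hcA
  -- the integrand and its z-derivative
  set F : ℂ → ℝ → ℂ := fun z θ => deriv (circleMap 0 τ) θ • (deriv σ (c θ) / (σ (c θ) - z))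
    with hFdef
  set F' : ℂ → ℝ → ℂ := fun z θ => deriv (circleMap 0 τ) θ • (deriv σ (c θ) / (σ (c θ) - z) ^ 2)
    with hF'def
  have key := intervalIntegral.hasDerivAt_integral_of_dominated_loc_of_deriv_le
    (𝕜 := ℂ) (μ := volume) (a := 0) (b := 2 * Real.pi) (F := F) (F' := F')
    (x₀ := z₀) (bound := fun _ => τ * (M₁ / (δ/2)^2)) (Metric.ball_mem_nhds z₀ (half_pos hδ))
    ?_ ?_ ?_ ?_ ?_ ?_
  · -- conclude: the integral of F' z₀ vanishes by the fundamental theorem of calculus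
    obtain ⟨hint, hder⟩ := key
    have heq0 : (∫ θ in (0:ℝ)..(2*Real.pi), F' z₀ θ) = 0 := by
      have hG : ∀ θ : ℝ, HasDerivAt (fun t => -(σ (c t) - z₀)⁻¹) (F' z₀ θ) θ := by
        intro θ
        have h1 : HasDerivAt (circleMap 0 τ) (deriv (circleMap 0 τ) θ) θ := by
          rw [deriv_circleMap]; exact hasDerivAt_circleMap 0 τ θ
        have h2 : HasDerivAt (fun w => (σ w - z₀)⁻¹)
            (-(deriv σ (c θ)) / (σ (c θ) - z₀) ^ 2) (c θ) := by
          have hσat : HasDerivAt σ (deriv σ (c θ)) (c θ) :=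
            (hσd.differentiableAt (hA.mem_nhds (hcA θ))).hasDerivAt
          have := (hσat.sub_const z₀).inv (sub_ne_zero.2 (hne θ))
          exact this
        have h3 := h2.scomp θ h1
        have : HasDerivAt (fun t => (σ (c t) - z₀)⁻¹)
            (deriv (circleMap 0 τ) θ • (-(deriv σ (c θ)) / (σ (c θ) - z₀) ^ 2)) θ := h3
        have h4 := this.neg
        rw [hF'def]
        refine h4.congr_deriv ?_
        simp only [smul_eq_mul]
        ring
      rw [intervalIntegral.integral_eq_sub_of_hasDerivAt (fun θ _ => hG θ) ?_]
      · have : c (2 * Real.pi) = c 0 := by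
          have := periodic_circleMap 0 τ 0
          simpa using this
        rw [this]; ring
      · -- interval integrability of F' z₀
        apply Continuous.intervalIntegrable
        rw [hF'def]
        apply hcont_dc.smul
        apply hcont_dsc.div ((hcont_sc.sub continuous_const).pow 2)
        intro θ
        exact pow_ne_zero 2 (sub_ne_zero.2 (hne θ))
    rw [heq0] at hder
    exact hder
  · -- measurability of F z for z near z₀
    filter_upwards [Metric.ball_mem_nhds z₀ (half_pos hδ)] with z hz
    apply Continuous.aestronglyMeasurable
    apply hcont_dc.smul
    apply hcont_dsc.div (hcont_sc.sub continuous_const)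
    intro θ
    have := hfar z hz θ
    intro h
    rw [show σ (c θ) - z = 0 from h, norm_zero] at this
    linarith
  · -- interval integrability of F z₀
    apply Continuous.intervalIntegrable
    apply hcont_dc.smul
    apply hcont_dsc.div (hcont_sc.sub continuous_const)
    intro θ
    exact sub_ne_zero.2 (hne θ)
  · -- measurability of F' z₀
    apply Continuous.aestronglyMeasurable
    apply hcont_dc.smul
    apply hcont_dsc.div ((hcont_sc.sub continuous_const).pow 2)
    intro θ
    exact pow_ne_zero 2 (sub_ne_zero.2 (hne θ))
  · -- the bound
    refine ae_of_all _ fun θ _ z hz => ?_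
    have hd2 : δ/2 ≤ ‖σ (c θ) - z‖ := hfar z hz θ
    have hd2' : (0:ℝ) < δ/2 := half_pos hδ
    rw [hF'def]
    have hnc : ‖deriv (circleMap 0 τ) θ‖ = τ := by
      simp only [deriv_circleMap, norm_mul, Complex.norm_I, mul_one,
        norm_circleMap_zero, abs_of_pos hτ]
    rw [norm_smul, hnc, norm_div]
    have h1 : ‖deriv σ (c θ)‖ ≤ M₁ := hM₁ _ (hcmem θ)
    have h2 : (δ/2)^2 ≤ ‖(σ (c θ) - z) ^ 2‖ := by
      rw [norm_pow]
      exact pow_le_pow_left₀ hd2'.le hd2 2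
    have h3 : ‖deriv σ (c θ)‖ / ‖(σ (c θ) - z) ^ 2‖ ≤ M₁ / (δ/2)^2 := by
      apply div_le_div₀ hM₁0 h1 (pow_pos hd2' 2) h2
    exact mul_le_mul_of_nonneg_left h3 hτ.le
  · exact intervalIntegrable_const
  · -- differentiability in z
    refine ae_of_all _ fun θ _ z hz => ?_
    have hden : σ (c θ) - z ≠ 0 := by
      intro h
      have := hfar z hz θ
      rw [h, norm_zero] at this
      linarith [half_pos hδ]
    have hbase : HasDerivAt (fun z => deriv σ (c θ) / (σ (c θ) - z))
        (deriv σ (c θ) / (σ (c θ) - z) ^ 2) z := by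
      have h1 : HasDerivAt (fun z : ℂ => σ (c θ) - z) (-1) z :=
        (hasDerivAt_id z).const_sub (σ (c θ))
      have := (hasDerivAt_const z (deriv σ (c θ))).div h1 hden
      refine this.congr_deriv ?_
      ring
    exact hbase.const_smul (deriv (circleMap 0 τ) θ)

section SEP
variable {r R : ℝ} {σ : ℂ → ℂ}

/-- The open annulus. -/
def ann (r R : ℝ) : Set ℂ := {w : ℂ | r < ‖w‖ ∧ ‖w‖ < R}

lemma isOpen_ann (r R : ℝ) : IsOpen (ann r R) :=
  (isOpen_lt continuous_const continuous_norm).inter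
    (isOpen_lt continuous_norm continuous_const)

lemma sphere_subset_ann {τ : ℝ} (h1 : r < τ) (h2 : τ < R) :
    Metric.sphere (0:ℂ) τ ⊆ ann r R := by
  intro w hw
  rw [mem_sphere_zero_iff_norm] at hw
  exact ⟨hw ▸ h1, hw ▸ h2⟩

/-- Key separation lemma: one of the two level curves `σ(|w| = ρ₁)`, `σ(|w| = ρ₃)` has the
point `σ wa` (with `|wa| = ρ₂`) in a *bounded* complementary component. -/
lemma exists_bounded_component (hr : 0 < r)
    (hσd : DifferentiableOn ℂ σ (ann r R)) (hσ'c : ContinuousOn (deriv σ) (ann r R))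
    (hσinj : Set.InjOn σ (ann r R)) (hσ'ne : ∀ w ∈ ann r R, deriv σ w ≠ 0)
    {ρ₁ ρ₂ ρ₃ : ℝ} (h1 : r < ρ₁) (h12 : ρ₁ < ρ₂) (h23 : ρ₂ < ρ₃) (h3R : ρ₃ < R)
    {wa : ℂ} (hwa : ‖wa‖ = ρ₂) :
    ∃ τ, r < τ ∧ τ < R ∧ τ ≠ ρ₂ ∧
      Bornology.IsBounded (connectedComponentIn (σ '' Metric.sphere (0:ℂ) τ)ᶜ (σ wa)) := by
  set A := ann r R with hAdef
  have hAopen : IsOpen A := isOpen_ann r R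
  have hwaA : wa ∈ A := ⟨hwa ▸ (h1.trans h12), hwa ▸ (h23.trans h3R)⟩
  set a := σ wa with hadef
  set n : ℝ → ℂ → ℂ := fun τ z => ∮ w in C(0, τ), deriv σ w / (σ w - z) with hndef
  have hτfacts : ∀ τ, r < τ → τ < R → τ ≠ ρ₂ →
      (a ∉ σ '' Metric.sphere (0:ℂ) τ) := by
    intro τ hrτ hτR hτρ₂
    rintro ⟨w', hw', heq⟩
    have hw'A : w' ∈ A := sphere_subset_ann hrτ hτR hw'
    have := hσinj hw'A hwaA heq
    rw [mem_sphere_zero_iff_norm] at hw'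
    exact hτρ₂ (by rw [← hw', this, hwa])
  have hconst : ∀ τ, r < τ → τ < R → ∀ z₁ z₂ : ℂ,
      z₁ ∈ connectedComponentIn (σ '' Metric.sphere (0:ℂ) τ)ᶜ z₂ →
      z₂ ∉ σ '' Metric.sphere (0:ℂ) τ → n τ z₁ = n τ z₂ := by
    intro τ hrτ hτR z₁ z₂ hz₁ hz₂
    have hCcomp : IsCompact (σ '' Metric.sphere (0:ℂ) τ) :=
      (isCompact_sphere 0 τ).image_of_continuousOn
        (hσd.continuousOn.mono (sphere_subset_ann hrτ hτR))
    refine const_on_of_hasDerivAt_zero (S := (σ '' Metric.sphere (0:ℂ) τ)ᶜ)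
      hCcomp.isClosed.isOpen_compl (fun z hz => ?_)
      (connectedComponentIn_subset _ _) isPreconnected_connectedComponentIn
      hz₁ (mem_connectedComponentIn hz₂)
    exact hasDerivAt_wind_zero hAopen hσd hσ'c (hr.trans hrτ)
      (sphere_subset_ann hrτ hτR) hz
  have hvanish : ∀ τ, r < τ → τ < R → τ ≠ ρ₂ →
      ¬ Bornology.IsBounded (connectedComponentIn (σ '' Metric.sphere (0:ℂ) τ)ᶜ a) →
      n τ a = 0 := by
    intro τ hrτ hτR hτρ₂ hunb
    have hnotmem := hτfacts τ hrτ hτR hτρ₂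
    obtain ⟨MC, hMC⟩ := (isCompact_sphere (0:ℂ) τ).exists_bound_of_continuousOn
      (hσd.continuousOn.mono (sphere_subset_ann hrτ hτR))
    obtain ⟨M₁, hM₁⟩ := (isCompact_sphere (0:ℂ) τ).exists_bound_of_continuousOn
      (hσ'c.mono (sphere_subset_ann hrτ hτR))
    have hM₁0 : 0 ≤ M₁ := by
      have hmem : circleMap 0 τ 0 ∈ Metric.sphere (0:ℂ) τ :=
        circleMap_mem_sphere _ (le_of_lt (hr.trans hrτ)) _
      exact le_trans (norm_nonneg _) (hM₁ _ hmem)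
    by_contra hne0
    have hεbound : ∀ ε > (0:ℝ), ‖n τ a‖ ≤ ε := by
      intro ε hε
      set N : ℝ := MC + max 1 (2 * Real.pi * τ * M₁ / ε) with hNdef
      have hmax1 : (1:ℝ) ≤ max 1 (2 * Real.pi * τ * M₁ / ε) := le_max_left _ _
      have : ∃ z ∈ connectedComponentIn (σ '' Metric.sphere (0:ℂ) τ)ᶜ a, N < ‖z‖ := by
        by_contra hcon
        push_neg at hcon
        exact hunb (Bornology.IsBounded.subset (Metric.isBounded_closedBall (x := (0:ℂ)) (r := N))
          (fun z hz => by simpa [Metric.mem_closedBall, dist_zero_right] using hcon z hz))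
      obtain ⟨z, hzcomp, hzfar⟩ := this
      have heqn : n τ a = n τ z := (hconst τ hrτ hτR z a hzcomp hnotmem).symm
      have hNMC : N - MC = max 1 (2 * Real.pi * τ * M₁ / ε) := by simp [hNdef]
      have hden : (0:ℝ) < N - MC := by
        rw [hNMC]; exact lt_of_lt_of_le one_pos hmax1
      have hbound : ‖n τ z‖ ≤ 2 * Real.pi * τ * (M₁ / (N - MC)) := by
        apply circleIntegral.norm_integral_le_of_norm_le_const (le_of_lt (hr.trans hrτ))
        intro w hw
        have hb1 : ‖deriv σ w‖ ≤ M₁ := hM₁ _ hw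
        have hb3 : ‖σ w‖ ≤ MC := hMC _ hw
        have hb2 : N - MC ≤ ‖σ w - z‖ := by
          have h4 := norm_sub_norm_le z (σ w)
          rw [norm_sub_rev]
          have : ‖z‖ - MC ≤ ‖z - σ w‖ := by linarith
          linarith
        rw [norm_div]
        exact div_le_div₀ hM₁0 hb1 hden hb2
      have hfinal : 2 * Real.pi * τ * (M₁ / (N - MC)) ≤ ε := by
        have hτ0 : (0:ℝ) < τ := hr.trans hrτ
        rw [← mul_div_assoc, div_le_iff₀ hden]
        calc 2 * Real.pi * τ * M₁ = ε * (2 * Real.pi * τ * M₁ / ε) := by field_simp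
        _ ≤ ε * (N - MC) := by
            apply mul_le_mul_of_nonneg_left _ hε.le
            rw [hNMC]; exact le_max_right _ _
      rw [heqn]
      exact le_trans hbound hfinal
    have hpos : 0 < ‖n τ a‖ := norm_pos_iff.2 hne0
    have := hεbound (‖n τ a‖/2) (by linarith)
    linarith
  -- residue computation
  set d : ℂ → ℂ := dslope σ wa with hddef
  have hdd : DifferentiableOn ℂ d A := (Complex.differentiableOn_dslope (hAopen.mem_nhds hwaA)).2 hσd
  have hdne : ∀ w ∈ A, d w ≠ 0 := by
    intro w hw
    rcases eq_or_ne w wa with rfl | hne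
    · rw [hddef, dslope_same]; exact hσ'ne _ hw
    · intro h0
      have hsd := sub_smul_dslope σ wa w
      rw [← hddef, h0, smul_zero] at hsd
      have : σ w = σ wa := by linear_combination -hsd
      exact hne (hσinj hw hwaA this)
  have hderivd : DifferentiableOn ℂ (deriv σ) A :=
    (hσd.analyticOnNhd hAopen).deriv.differentiableOn
  set q : ℂ → ℂ := fun w => deriv σ w / d w - 1 with hqdef
  have hqd : DifferentiableOn ℂ q A := (hderivd.div hdd hdne).sub (differentiableOn_const 1)
  have hqwa : q wa = 0 := by
    rw [hqdef]
    simp only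
    rw [hddef, dslope_same, div_self (hσ'ne _ hwaA), sub_self]
  set E : ℂ → ℂ := dslope q wa with hEdef
  have hEd : DifferentiableOn ℂ E A := (Complex.differentiableOn_dslope (hAopen.mem_nhds hwaA)).2 hqd
  have hEeq : ∀ w ∈ A, w ≠ wa → deriv σ w / (σ w - a) = E w + (w - wa)⁻¹ := by
    intro w hw hne
    have hsub : w - wa ≠ 0 := sub_ne_zero.2 hne
    have hdw : d w ≠ 0 := hdne w hw
    have hEw : E w = q w / (w - wa) := by
      rw [hEdef, dslope_of_ne q hne, slope_def_field, hqwa, sub_zero]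
    have hds : (w - wa) * d w = σ w - σ wa := by
      have := sub_smul_dslope σ wa w
      rw [← hddef] at this
      simpa [smul_eq_mul] using this
    have hσwa : σ w - a = (w - wa) * d w := by rw [hds, hadef]
    rw [hEw, hqdef, hσwa]
    field_simp
    ring
  have hsplit : ∀ τ, r < τ → τ < R → τ ≠ ρ₂ →
      n τ a = (∮ w in C(0,τ), E w) + (∮ w in C(0,τ), (w - wa)⁻¹) := by
    intro τ hrτ hτR hτρ₂
    have hτ0 : (0:ℝ) ≤ τ := (hr.trans hrτ).le
    have hwne : ∀ w ∈ Metric.sphere (0:ℂ) τ, w ≠ wa := by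
      intro w hw h
      rw [mem_sphere_zero_iff_norm] at hw
      exact hτρ₂ (by rw [← hw, h, hwa])
    have hEint : CircleIntegrable E 0 τ :=
      ContinuousOn.circleIntegrable hτ0 (hEd.continuousOn.mono (sphere_subset_ann hrτ hτR))
    have hIint : CircleIntegrable (fun w => (w - wa)⁻¹) 0 τ := by
      apply ContinuousOn.circleIntegrable hτ0
      intro w hw
      exact ((continuousAt_id.sub continuousAt_const).inv₀
        (sub_ne_zero.2 (hwne w hw))).continuousWithinAt
    have hfane : ∀ w ∈ Metric.sphere (0:ℂ) τ, σ w - a ≠ 0 := by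
      intro w hw h
      have hwA : w ∈ A := sphere_subset_ann hrτ hτR hw
      have : σ w = σ wa := by rw [hadef] at h; linear_combination h
      exact hwne w hw (hσinj hwA hwaA this)
    have hfa_int : CircleIntegrable (fun w => deriv σ w / (σ w - a)) 0 τ := by
      apply ContinuousOn.circleIntegrable hτ0
      apply ContinuousOn.div (hσ'c.mono (sphere_subset_ann hrτ hτR))
      · exact (hσd.continuousOn.mono (sphere_subset_ann hrτ hτR)).sub continuousOn_const
      · exact hfane
    have hsubint := circleIntegral.integral_sub hfa_int hIint
    have hcongr : (∮ w in C(0, τ), (deriv σ w / (σ w - a) - (w - wa)⁻¹))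
        = ∮ w in C(0, τ), E w := by
      apply circleIntegral.integral_congr hτ0
      intro w hw
      have := hEeq w (sphere_subset_ann hrτ hτR hw) (hwne w hw)
      simp only [this]
      ring
    rw [hndef]
    simp only
    rw [← sub_eq_iff_eq_add']
    linear_combination (hsubint.symm.trans hcongr)
  have hsub31 : Metric.closedBall (0:ℂ) ρ₃ \ Metric.ball 0 ρ₁ ⊆ A := by
    rintro w ⟨hw1, hw2⟩
    rw [Metric.mem_closedBall, dist_zero_right] at hw1
    rw [Metric.mem_ball, dist_zero_right, not_lt] at hw2
    exact ⟨lt_of_lt_of_le h1 hw2, lt_of_le_of_lt hw1 h3R⟩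
  have hEann := Complex.circleIntegral_eq_of_differentiable_on_annulus_off_countable
    (c := (0:ℂ)) (f := E) (lt_trans hr h1) (le_of_lt (h12.trans h23)) countable_empty
    (hEd.continuousOn.mono hsub31)
    (fun z hz => hEd.differentiableAt (hAopen.mem_nhds (hsub31
      ⟨Metric.ball_subset_closedBall hz.1.1, fun h => hz.1.2 (Metric.ball_subset_closedBall h)⟩)))
  have hinv3 : (∮ w in C(0,ρ₃), (w - wa)⁻¹) = 2 * Real.pi * Complex.I :=
    circleIntegral.integral_sub_inv_of_mem_ball
      (by rw [Metric.mem_ball, dist_zero_right, hwa]; exact h23)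
  have hinv1 : (∮ w in C(0,ρ₁), (w - wa)⁻¹) = 0 := by
    apply Complex.circleIntegral_eq_zero_of_differentiable_on_off_countable
      (le_of_lt (hr.trans h1)) countable_empty
    · intro w hw
      rw [Metric.mem_closedBall, dist_zero_right] at hw
      have : w ≠ wa := fun h => by rw [h, hwa] at hw; linarith
      exact ((continuousAt_id.sub continuousAt_const).inv₀
        (sub_ne_zero.2 this)).continuousWithinAt
    · intro w hw
      have hwlt : ‖w‖ < ρ₁ := by simpa [Metric.mem_ball, dist_zero_right] using hw.1
      have : w ≠ wa := fun h => by rw [h, hwa] at hwlt; linarith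
      exact ((differentiableAt_id.sub_const wa).inv (sub_ne_zero.2 this))
  have hres : n ρ₃ a - n ρ₁ a = 2 * Real.pi * Complex.I := by
    rw [hsplit ρ₃ (lt_trans h1 (h12.trans h23)) h3R (ne_of_gt h23),
      hsplit ρ₁ h1 (lt_trans h12 (h23.trans h3R)) (ne_of_lt h12), hEann, hinv3, hinv1]
    ring
  by_cases hb : Bornology.IsBounded (connectedComponentIn (σ '' Metric.sphere (0:ℂ) ρ₁)ᶜ a)
  · exact ⟨ρ₁, h1, lt_trans h12 (h23.trans h3R), ne_of_lt h12, hb⟩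
  · by_cases hb3 : Bornology.IsBounded (connectedComponentIn (σ '' Metric.sphere (0:ℂ) ρ₃)ᶜ a)
    · exact ⟨ρ₃, lt_trans h1 (h12.trans h23), h3R, ne_of_gt h23, hb3⟩
    · exfalso
      have hv1 : n ρ₁ a = 0 := hvanish ρ₁ h1 (lt_trans h12 (h23.trans h3R)) (ne_of_lt h12) hb
      have hv3 : n ρ₃ a = 0 := hvanish ρ₃ (lt_trans h1 (h12.trans h23)) h3R (ne_of_gt h23) hb3
      rw [hv1, hv3] at hres
      have := congrArg Complex.im hres
      simp at this
end SEP
section NORM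
/-- Normality of the iterate family on a bounded open set whose frontier lies on an invariant
curve on which the dynamics is conjugate to a rotation. Montel-free: uses the maximum principle. -/
lemma normalOn_of_conj {g σ ψ : ℂ → ℂ} (hgdiff : Differentiable ℂ g) {p : ℕ} (hp : 0 < p)
    {c : ℂ} (hc : ‖c‖ = 1) {K W : Set ℂ}
    {τ : ℝ} (hτ : 0 < τ)
    (hσc : ContinuousOn σ (Metric.sphere (0:ℂ) τ))
    (hσK : ∀ w ∈ Metric.sphere (0:ℂ) τ, σ w ∈ K)
    (hψK : ∀ x ∈ K, ψ x ∈ Metric.sphere (0:ℂ) τ)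
    (hrep : ∀ (n : ℕ), ∀ x ∈ K, (g^[p])^[n] x = σ (c ^ n * ψ x))
    {M : ℝ} (hKM : ∀ x ∈ K, ‖x‖ ≤ M)
    (hWb : Bornology.IsBounded W) (hWfr : frontier W ⊆ K) :
    NormalOn {f | ∃ n : ℕ, 0 < n ∧ f = g^[n]} W := by
  unfold NormalOn
  intro s hs
  choose m hmpos hseq using hs
  -- pigeonhole: some residue class mod p is infinite
  obtain ⟨j₀, hj₀inf⟩ : ∃ j, {k | m k % p = j}.Infinite := by
    by_contra hcon
    push_neg at hcon
    have huniv : (Set.univ : Set ℕ) ⊆ ⋃ j ∈ Finset.range p, {k | m k % p = j} := by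
      intro k _
      simp only [Set.mem_iUnion]
      exact ⟨m k % p, by simpa using Nat.mod_lt _ hp, rfl⟩
    exact Set.infinite_univ (Set.Finite.subset
      (Set.Finite.biUnion (Finset.range p).finite_toSet (fun j _ => hcon j)) huniv)
  set φ₁ := Nat.nth (fun k => m k % p = j₀) with hφ₁def
  have hφ₁s : StrictMono φ₁ := Nat.nth_strictMono hj₀inf
  have hφ₁m : ∀ k, m (φ₁ k) % p = j₀ := fun k => Nat.nth_mem_of_infinite hj₀inf k
  set nseq : ℕ → ℕ := fun k => m (φ₁ k) / p with hnseqdef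
  have hdecomp : ∀ k, m (φ₁ k) = j₀ + p * nseq k := by
    intro k
    have h1 := Nat.div_add_mod (m (φ₁ k)) p
    have h2 := hφ₁m k
    have h3 : nseq k = m (φ₁ k) / p := rfl
    rw [h3]
    omega
  have hcs : ∀ k, (c ^ nseq k) ∈ Metric.sphere (0:ℂ) 1 := by
    intro k
    rw [mem_sphere_zero_iff_norm, norm_pow, hc, one_pow]
  obtain ⟨cstar, _, φ₂, hφ₂s, hφ₂t⟩ := (isCompact_sphere (0:ℂ) 1).tendsto_subseq hcs
  set φ := φ₁ ∘ φ₂ with hφdef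
  have hφs : StrictMono φ := hφ₁s.comp hφ₂s
  set u : ℕ → ℂ → ℂ := fun l => (g^[p])^[nseq (φ₂ l)] with hudef
  have hentire : ∀ n : ℕ, Differentiable ℂ ((g^[p])^[n]) := fun n => (hgdiff.iterate p).iterate n
  have hsphmul : ∀ (n : ℕ) {x}, x ∈ K → c ^ n * ψ x ∈ Metric.sphere (0:ℂ) τ := by
    intro n x hx
    have := hψK x hx
    rw [mem_sphere_zero_iff_norm] at this ⊢
    rw [norm_mul, norm_pow, hc, one_pow, one_mul, this]
  have hKbound : ∀ (n : ℕ), ∀ x ∈ frontier W, ‖(g^[p])^[n] x‖ ≤ M := by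
    intro n x hx
    rw [hrep n x (hWfr hx)]
    exact hKM _ (hσK _ (hsphmul n (hWfr hx)))
  have hclosureBound : ∀ (n : ℕ), ∀ x ∈ closure W, ‖(g^[p])^[n] x‖ ≤ M := fun n x hx =>
    Complex.norm_le_of_forall_mem_frontier_norm_le hWb (hentire n).diffContOnCl
      (fun z hz => hKbound n z hz) hx
  have hM0 : 0 ≤ M := by
    rcases eq_or_ne (frontier W) ∅ with hfr | hfr
    · -- if the frontier is empty, W is clopen bounded hence empty; M plays no role, but we
      -- still need 0 ≤ M only when K is nonempty via σ; handle: use τ-sphere point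
      have hKne : (σ (τ:ℂ)) ∈ K := hσK _ (by simp [mem_sphere_zero_iff_norm,
        Complex.norm_real, abs_of_pos hτ])
      exact le_trans (norm_nonneg _) (hKM _ hKne)
    · have hKne : (σ (τ:ℂ)) ∈ K := hσK _ (by simp [mem_sphere_zero_iff_norm,
        Complex.norm_real, abs_of_pos hτ])
      exact le_trans (norm_nonneg _) (hKM _ hKne)
  have hCauchyC : CauchySeq (fun l => c ^ nseq (φ₂ l)) := hφ₂t.cauchySeq
  -- the uniform Cauchy estimate on the closure of W
  have hucs' : ∀ ε > (0:ℝ), ∃ N, ∀ k ≥ N, ∀ l ≥ N, ∀ x ∈ closure W,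
      dist (u k x) (u l x) < ε := by
    intro ε hε
    have hσuc := (isCompact_sphere (0:ℂ) τ).uniformContinuousOn_of_continuous hσc
    rw [Metric.uniformContinuousOn_iff] at hσuc
    obtain ⟨δ, hδ, hσδ⟩ := hσuc (ε/2) (by linarith)
    rw [Metric.cauchySeq_iff] at hCauchyC
    obtain ⟨N, hN⟩ := hCauchyC (δ/τ) (div_pos hδ hτ)
    refine ⟨N, fun k hk l hl x hx => ?_⟩
    have hfr : ∀ y ∈ frontier W, dist (u k y) (u l y) ≤ ε/2 := by
      intro y hy
      have hyK : y ∈ K := hWfr hy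
      have hψy := hψK y hyK
      rw [mem_sphere_zero_iff_norm] at hψy
      have hky := hsphmul (nseq (φ₂ k)) hyK
      have hly := hsphmul (nseq (φ₂ l)) hyK
      rw [hudef]
      simp only
      rw [hrep _ y hyK, hrep _ y hyK]
      have hdd : dist (c ^ nseq (φ₂ k) * ψ y) (c ^ nseq (φ₂ l) * ψ y) < δ := by
        rw [dist_eq_norm, ← sub_mul, norm_mul, hψy]
        have h5 := hN k hk l hl
        rw [dist_eq_norm] at h5
        calc ‖c ^ nseq (φ₂ k) - c ^ nseq (φ₂ l)‖ * τ < (δ/τ) * τ :=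
          mul_lt_mul_of_pos_right h5 hτ
        _ = δ := by field_simp
      exact (hσδ _ hky _ hly hdd).le
    have hdiffcl : DiffContOnCl ℂ (fun z => u k z - u l z) W :=
      ((hentire _).sub (hentire _)).diffContOnCl
    have hmax := Complex.norm_le_of_forall_mem_frontier_norm_le hWb hdiffcl
      (C := ε/2) (fun z hz => by rw [← dist_eq_norm]; exact hfr z hz) hx
    rw [dist_eq_norm]
    calc ‖u k x - u l x‖ ≤ ε/2 := hmax
    _ < ε := by linarith
  have hucs : UniformCauchySeqOn u atTop (closure W) :=
    Metric.uniformCauchySeqOn_iff.2 hucs'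
  have hptw : ∀ x, ∃ y, (x ∈ closure W → Filter.Tendsto (fun l => u l x) atTop (nhds y)) := by
    intro x
    by_cases hx : x ∈ closure W
    · have hcs2 : CauchySeq (fun l => u l x) := by
        rw [Metric.cauchySeq_iff]
        intro ε hε
        obtain ⟨N, hN⟩ := hucs' ε hε
        exact ⟨N, fun k hk l hl => hN k hk l hl x hx⟩
      obtain ⟨y, hy⟩ := cauchySeq_tendsto_of_complete hcs2
      exact ⟨y, fun _ => hy⟩
    · exact ⟨0, fun h => absurd h hx⟩
  choose Hlim hHlim using hptw
  have htuo : TendstoUniformlyOn u Hlim atTop (closure W) :=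
    hucs.tendstoUniformlyOn_of_tendsto (fun x hx => hHlim x hx)
  have hHlimM : ∀ x ∈ closure W, ‖Hlim x‖ ≤ M := fun x hx =>
    le_of_tendsto ((hHlim x hx).norm) (Filter.Eventually.of_forall fun l => hclosureBound _ x hx)
  have hgj := (ProperSpace.isCompact_closedBall (0:ℂ) M).uniformContinuousOn_of_continuous
    ((hgdiff.iterate j₀).continuous.continuousOn)
  rw [Metric.uniformContinuousOn_iff] at hgj
  refine ⟨φ, hφs, Or.inl ⟨fun x => g^[j₀] (Hlim x), ?_⟩⟩
  have hfunrw : (fun l => s (φ l)) = fun l x => g^[j₀] (u l x) := by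
    funext l x
    rw [hseq (φ l)]
    show g^[m (φ₁ (φ₂ l))] x = _
    rw [hdecomp (φ₂ l), Function.iterate_add_apply, Function.iterate_mul]
  rw [hfunrw]
  have htuo2 : TendstoUniformlyOn (fun l x => g^[j₀] (u l x)) (fun x => g^[j₀] (Hlim x))
      Filter.atTop (closure W) := by
    rw [Metric.tendstoUniformlyOn_iff]
    intro ε hε
    obtain ⟨δ, hδ, hgδ⟩ := hgj ε hε
    rw [Metric.tendstoUniformlyOn_iff] at htuo
    filter_upwards [htuo δ hδ] with l hl x hx
    have h1 : Hlim x ∈ Metric.closedBall (0:ℂ) M := by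
      rw [Metric.mem_closedBall, dist_zero_right]
      exact hHlimM x hx
    have h2 : u l x ∈ Metric.closedBall (0:ℂ) M := by
      rw [Metric.mem_closedBall, dist_zero_right]
      exact hclosureBound _ x hx
    exact hgδ _ h1 _ h2 (hl x hx)
  exact (htuo2.tendstoLocallyUniformlyOn).mono subset_closure
end NORM

/-- `F(G)` contains no Herman rings: no component `U` of `F(G)` with
`g(U) ⊆ U` for some `g ∈ G` is contained in a Herman ring of `g`. -/
theorem stmt5 (G : Set (ℂ → ℂ)) (hG : IsTransSemigroup G) :
    ¬ ∃ (U : Set ℂ) (g : ℂ → ℂ), IsComponentOf U (fatou G) ∧ g ∈ G ∧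
      g '' U ⊆ U ∧ ∃ V, IsHermanRingOf g V ∧ U ⊆ V := by
  rintro ⟨U, g, _, hgG, _, V,
    ⟨⟨zV, hzV, hVeq⟩, p, hp, hinvV, ψ, r, R, α, hr, hrR, hα, hψd, hψinj, hψimg, hconj⟩, _⟩
  have hgdiff : Differentiable ℂ g := (hG.2.2 g hgG).1
  have hFopen : IsOpen (fatouFn g) := isOpen_fatou _
  have hVopen : IsOpen V := hVeq ▸ hFopen.connectedComponentIn
  have hVconn : IsPreconnected V := hVeq ▸ isPreconnected_connectedComponentIn
  have hVfront : frontier V ∩ fatouFn g = ∅ :=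
    hVeq ▸ frontier_connectedComponentIn_disjoint hFopen zV
  set h : ℂ → ℂ := g^[p] with hhdef
  have hhd : Differentiable ℂ h := hgdiff.iterate p
  set c : ℂ := Complex.exp (2 * Real.pi * α * Complex.I) with hcdef
  have hcnorm : ‖c‖ = 1 := by
    rw [hcdef, Complex.norm_exp]
    have hre : (2 * (Real.pi:ℂ) * (α:ℂ) * Complex.I)
        = ((2 * Real.pi * α : ℝ) : ℂ) * Complex.I := by push_cast; ring
    rw [hre]
    simp
  have hmapsV : ∀ z ∈ V, h z ∈ V := fun z hz => hinvV ⟨z, hz, rfl⟩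
  have hψimg' : ψ '' V = ann r R := by
    rw [hψimg]
    ext w
    simp [ann]
  have hψmem : ∀ z ∈ V, ψ z ∈ ann r R := fun z hz => hψimg' ▸ Set.mem_image_of_mem ψ hz
  have hiter : ∀ n : ℕ, ∀ z ∈ V, h^[n] z ∈ V ∧ ψ (h^[n] z) = c ^ n * ψ z := by
    intro n
    induction n with
    | zero => intro z hz; simpa using hz
    | succ n ih =>
      intro z hz
      rw [Function.iterate_succ_apply]
      obtain ⟨ih1, ih2⟩ := ih (h z) (hmapsV z hz)
      refine ⟨ih1, ?_⟩
      rw [ih2, hconj z hz, pow_succ]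
      ring
  -- radii
  set ρ₁ : ℝ := r + (R - r)/4 with hρ₁def
  set ρ₂ : ℝ := r + (R - r)/2 with hρ₂def
  set ρ₃ : ℝ := r + 3*(R - r)/4 with hρ₃def
  have h1 : r < ρ₁ := by rw [hρ₁def]; linarith
  have h12 : ρ₁ < ρ₂ := by rw [hρ₁def, hρ₂def]; linarith
  have h23 : ρ₂ < ρ₃ := by rw [hρ₂def, hρ₃def]; linarith
  have h3R : ρ₃ < R := by rw [hρ₃def]; linarith
  have hρ₂pos : 0 < ρ₂ := by rw [hρ₂def]; linarith
  set wa : ℂ := ((ρ₂ : ℝ) : ℂ) with hwadef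
  have hwa : ‖wa‖ = ρ₂ := by
    rw [hwadef, Complex.norm_real, Real.norm_eq_abs, abs_of_pos hρ₂pos]
  have hwaann : wa ∈ ann r R := ⟨by rw [hwa]; linarith, by rw [hwa]; linarith⟩
  -- the inverse map σ
  set σ : ℂ → ℂ := Function.invFunOn ψ V with hσdef
  have hσleft : ∀ z ∈ V, σ (ψ z) = z := fun z hz => hψinj.leftInvOn_invFunOn hz
  have hσmem : ∀ w ∈ ann r R, σ w ∈ V ∧ ψ (σ w) = w := by
    intro w hw
    rw [← hψimg'] at hw
    obtain ⟨z, hz, rfl⟩ := hw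
    rw [hσleft z hz]
    exact ⟨hz, rfl⟩
  -- ψ is an open map on V
  have hψopen : ∀ s ⊆ V, IsOpen s → IsOpen (ψ '' s) := by
    rcases (hψd.analyticOnNhd hVopen).is_constant_or_isOpen hVconn with ⟨w, hw⟩ | hopen
    · exfalso
      have hm1 : ((ρ₁ : ℝ) : ℂ) ∈ ψ '' V := by
        rw [hψimg']
        constructor <;> rw [Complex.norm_real, Real.norm_eq_abs, abs_of_pos (by linarith)] <;>
          linarith
      have hm3 : ((ρ₃ : ℝ) : ℂ) ∈ ψ '' V := by
        rw [hψimg']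
        constructor <;> rw [Complex.norm_real, Real.norm_eq_abs, abs_of_pos (by linarith)] <;>
          linarith
      obtain ⟨z1, hz1, he1⟩ := hm1
      obtain ⟨z2, hz2, he2⟩ := hm3
      rw [hw z1 hz1] at he1
      rw [hw z2 hz2] at he2
      have : ((ρ₁ : ℝ) : ℂ) = ((ρ₃ : ℝ) : ℂ) := by rw [← he1, ← he2]
      have : (ρ₁ : ℝ) = ρ₃ := by exact_mod_cast this
      linarith
    · exact hopen
  have hσcont : ContinuousOn σ (ann r R) := by
    intro w₀ hw₀
    obtain ⟨hσw₀V, hψσw₀⟩ := hσmem w₀ hw₀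
    rw [ContinuousWithinAt, tendsto_nhds]
    intro N hNopen hNmem
    have hO : IsOpen (ψ '' (N ∩ V)) := hψopen _ Set.inter_subset_right (hNopen.inter hVopen)
    have hw₀O : w₀ ∈ ψ '' (N ∩ V) := ⟨σ w₀, ⟨hNmem, hσw₀V⟩, hψσw₀⟩
    refine Filter.mem_of_superset (mem_nhdsWithin_of_mem_nhds (hO.mem_nhds hw₀O)) ?_
    rintro w ⟨z, ⟨hzN, hzV'⟩, rfl⟩
    simpa [hσleft z hzV'] using hzN
  have hψ'ne : ∀ z ∈ V, deriv ψ z ≠ 0 := fun z hz =>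
    deriv_ne_zero_of_injOn hVopen hψd hψinj hz
  have hσdiff : ∀ w ∈ ann r R, HasDerivAt σ (deriv ψ (σ w))⁻¹ w := by
    intro w hw
    obtain ⟨hσwV, hψσw⟩ := hσmem w hw
    have hca : ContinuousAt σ w := (hσcont.continuousAt ((isOpen_ann r R).mem_nhds hw))
    have hda : HasDerivAt ψ (deriv ψ (σ w)) (σ w) :=
      (hψd.differentiableAt (hVopen.mem_nhds hσwV)).hasDerivAt
    apply HasDerivAt.of_local_left_inverse hca hda (hψ'ne _ hσwV)
    filter_upwards [(isOpen_ann r R).eventually_mem hw] with y hy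
    exact (hσmem y hy).2
  have hσd : DifferentiableOn ℂ σ (ann r R) := fun w hw =>
    ((hσdiff w hw).differentiableAt).differentiableWithinAt
  have hσ'eq : ∀ w ∈ ann r R, deriv σ w = (deriv ψ (σ w))⁻¹ := fun w hw => (hσdiff w hw).deriv
  have hσ'c : ContinuousOn (deriv σ) (ann r R) := by
    have hdψc : ContinuousOn (deriv ψ) V := ((hψd.analyticOnNhd hVopen).deriv).continuousOn
    have hc2 : ContinuousOn (fun w => (deriv ψ (σ w))⁻¹) (ann r R) := by
      apply ContinuousOn.inv₀
      · exact hdψc.comp hσcont (fun w hw => (hσmem w hw).1)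
      · exact fun w hw => hψ'ne _ (hσmem w hw).1
    exact hc2.congr (fun w hw => hσ'eq w hw)
  have hσinj : Set.InjOn σ (ann r R) := by
    intro w1 hw1 w2 hw2 he
    have e1 := (hσmem w1 hw1).2
    have e2 := (hσmem w2 hw2).2
    rw [← e1, ← e2, he]
  have hσ'ne2 : ∀ w ∈ ann r R, deriv σ w ≠ 0 := fun w hw => by
    rw [hσ'eq w hw]
    exact inv_ne_zero (hψ'ne _ (hσmem w hw).1)
  -- separation: a bounded complementary component
  obtain ⟨τ, hrτ, hτR, hτρ₂, hbnd⟩ :=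
    exists_bounded_component hr hσd hσ'c hσinj hσ'ne2 h1 h12 h23 h3R hwa
  set a : ℂ := σ wa with hadef
  have haV : a ∈ V := (hσmem wa hwaann).1
  have hψa : ψ a = wa := (hσmem wa hwaann).2
  set C : Set ℂ := σ '' Metric.sphere (0:ℂ) τ with hCdef
  have hsphann : Metric.sphere (0:ℂ) τ ⊆ ann r R := sphere_subset_ann hrτ hτR
  have hCV : C ⊆ V := by
    rintro z ⟨w, hw, rfl⟩
    exact (hσmem w (hsphann hw)).1
  have hCcomp : IsCompact C :=
    (isCompact_sphere 0 τ).image_of_continuousOn (hσd.continuousOn.mono hsphann)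
  have hCchar : ∀ z, z ∈ C ↔ z ∈ V ∧ ‖ψ z‖ = τ := by
    intro z
    constructor
    · rintro ⟨w, hw, rfl⟩
      refine ⟨(hσmem w (hsphann hw)).1, ?_⟩
      rw [(hσmem w (hsphann hw)).2]
      rwa [mem_sphere_zero_iff_norm] at hw
    · rintro ⟨hzV', hzn⟩
      exact ⟨ψ z, by rwa [mem_sphere_zero_iff_norm], hσleft z hzV'⟩
  have haC : a ∉ C := by
    intro hmem
    have := ((hCchar a).1 hmem).2
    rw [hψa, hwa] at this
    exact hτρ₂ this.symm
  set W : Set ℂ := connectedComponentIn Cᶜ a with hWdef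
  have haW : a ∈ W := mem_connectedComponentIn haC
  have hWopen : IsOpen W := hCcomp.isClosed.isOpen_compl.connectedComponentIn
  have hWconn : IsPreconnected W := isPreconnected_connectedComponentIn
  have hWfr : frontier W ⊆ C := by
    have hde := frontier_connectedComponentIn_disjoint hCcomp.isClosed.isOpen_compl a
    intro z hz
    by_contra hzc
    have : z ∈ frontier W ∩ Cᶜ := ⟨hz, hzc⟩
    rw [hde] at this
    exact this
  have hclW : closure W ⊆ W ∪ C := by
    intro x hx
    by_cases hxW : x ∈ W
    · exact Or.inl hxW
    · exact Or.inr (hWfr ⟨hx, by rwa [hWopen.interior_eq]⟩)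
  -- W is not contained in V (max/min modulus principle)
  have hWnotsub : ¬ (W ⊆ V) := by
    intro hsub
    have hclV : closure W ⊆ V := fun x hx => (hclW hx).elim (fun hh => hsub hh) (fun hh => hCV hh)
    rcases lt_or_gt_of_ne hτρ₂ with hlt | hgt
    · -- τ < ρ₂ : maximum principle for ψ
      have hψdW : DiffContOnCl ℂ ψ W := ⟨hψd.mono hsub, hψd.continuousOn.mono hclV⟩
      have hb := Complex.norm_le_of_forall_mem_frontier_norm_le hbnd hψdW (C := τ)
        (fun z hz => le_of_eq ((hCchar z).1 (hWfr hz)).2) (subset_closure haW)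
      rw [hψa, hwa] at hb
      linarith
    · -- ρ₂ < τ : minimum principle via 1/ψ
      have hψne : ∀ z ∈ V, ψ z ≠ 0 := by
        intro z hz h0
        have := (hψmem z hz).1
        rw [h0] at this
        simp at this
        linarith
      have hinvd : DiffContOnCl ℂ (fun z => (ψ z)⁻¹) W :=
        ⟨(hψd.mono hsub).inv (fun z hz => hψne z (hsub hz)),
         (hψd.continuousOn.mono hclV).inv₀ (fun z hz => hψne z (hclV hz))⟩
      have hτpos : 0 < τ := hr.trans hrτ
      have hb := Complex.norm_le_of_forall_mem_frontier_norm_le hbnd hinvd (C := τ⁻¹)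
        (fun z hz => ?_) (subset_closure haW)
      · rw [norm_inv, hψa, hwa] at hb
        have : τ ≤ ρ₂ := by
          rwa [inv_le_inv₀ (by linarith) hτpos] at hb
        linarith
      · have := ((hCchar z).1 (hWfr hz)).2
        rw [norm_inv, this]
  obtain ⟨q, hqW, hqV⟩ := Set.not_subset.1 hWnotsub
  -- find a frontier point of V inside W
  obtain ⟨zs, hzsW, hzsF⟩ : ∃ zs ∈ W, zs ∈ frontier V := by
    by_contra hcon
    push_neg at hcon
    have hcover : W ⊆ V ∪ (closure V)ᶜ := by
      intro z hz
      by_cases hzV' : z ∈ V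
      · exact Or.inl hzV'
      · refine Or.inr fun hcl => ?_
        have : z ∈ frontier V := ⟨hcl, by rwa [hVopen.interior_eq]⟩
        exact hcon z hz this
    have hq2 : q ∈ (closure V)ᶜ := by
      intro hcl
      exact hqV (by
        have : q ∈ frontier V := ⟨hcl, by rwa [hVopen.interior_eq]⟩
        exact absurd this (hcon q hqW))
    obtain ⟨z, hzW, hz1, hz2⟩ := hWconn V (closure V)ᶜ hVopen isClosed_closure.isOpen_compl
      hcover ⟨a, haW, haV⟩ ⟨q, hqW, hq2⟩
    exact hz2 (subset_closure hz1)
  -- normality of the iterate family on W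
  have hN : NormalOn {f | ∃ n : ℕ, 0 < n ∧ f = g^[n]} W := by
    obtain ⟨M, hM⟩ := hCcomp.exists_bound_of_continuousOn continuousOn_id
    refine normalOn_of_conj (K := C) (W := W) (ψ := ψ) hgdiff hp hcnorm (hr.trans hrτ) (hσcont.mono hsphann)
      (fun w hw => ⟨w, hw, rfl⟩) (fun x hx => ?_) (fun n x hx => ?_) (fun x hx => hM x hx)
      hbnd hWfr
    · rw [mem_sphere_zero_iff_norm]
      exact ((hCchar x).1 hx).2
    · -- representation of the iterates on C
      have hxV : x ∈ V := hCV hx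
      obtain ⟨hit1, hit2⟩ := hiter n x hxV
      rw [← hit2, hσleft _ hit1]
  have hzsfat : zs ∈ fatouFn g := ⟨W, hWopen, hzsW, hN⟩
  have : zs ∈ frontier V ∩ fatouFn g := ⟨hzsF, hzsfat⟩
  rw [hVfront] at this
  exact this
end
end

section
/- Let G = [g₁, …, gₙ] be a finitely generated transcendental semigroup such that for every g ∈ G all stable domains (connected components) of the Fatou set F(g) are bounded. Then F(G) contains no asymptotic value of G, where an asymptotic value of G is an asymptotic value of some g ∈ G. -/
open Set Filter Topology

noncomputable section

/-- Elements of a semigroup generated by differentiable functions are differentiable. -/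
lemma semigroupGen_differentiable {S : Set (ℂ → ℂ)}
    (hS : ∀ f ∈ S, Differentiable ℂ f) :
    ∀ h ∈ semigroupGen S, Differentiable ℂ h := by
  intro h hh
  induction hh with
  | base hf => exact hS _ hf
  | comp hf hg ihf ihg => exact ihf.comp ihg

/-- Positive iterates of a semigroup element belong to the semigroup. -/
lemma iterate_mem_semigroupGen {S : Set (ℂ → ℂ)} {h : ℂ → ℂ}
    (hh : h ∈ semigroupGen S) : ∀ m, 0 < m → h^[m] ∈ semigroupGen S := by
  intro m hm
  induction m with
  | zero => omega
  | succ m ih =>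
    rcases Nat.eq_zero_or_pos m with h0 | h0
    · subst h0; rw [Function.iterate_one]; exact hh
    · rw [Function.iterate_succ']
      exact InSemigroup.comp hh (ih h0)

/-- Normality passes to subfamilies. -/
lemma NormalOn.mono {F F' : Set (ℂ → ℂ)} {U : Set ℂ} (hF : NormalOn F U)
    (hsub : F' ⊆ F) : NormalOn F' U :=
  fun s hs => hF s fun n => hsub (hs n)

/-- The Fatou set of a semigroup is contained in the classical Fatou set of each
of its elements. -/
lemma fatou_subset_fatouFn {S : Set (ℂ → ℂ)} {h : ℂ → ℂ}
    (hh : h ∈ semigroupGen S) : fatou (semigroupGen S) ⊆ fatouFn h := by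
  rintro z ⟨U, hUo, hzU, hN⟩
  refine ⟨U, hUo, hzU, hN.mono ?_⟩
  rintro f ⟨m, hm, rfl⟩
  exact iterate_mem_semigroupGen hh m hm

/-- A constant sequence tends locally uniformly to its value. -/
lemma tlu_const {f : ℂ → ℂ} {U : Set ℂ} :
    TendstoLocallyUniformlyOn (fun _ : ℕ => f) f atTop U :=
  fun u hu _ _ => ⟨U, self_mem_nhdsWithin,
    Filter.Eventually.of_forall fun _ _ _ => refl_mem_uniformity hu⟩

/-- Backward invariance of the classical Fatou set. -/
lemma fatouFn_backward {h : ℂ → ℂ} (hd : Differentiable ℂ h) {z : ℂ}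
    (hz : h z ∈ fatouFn h) : z ∈ fatouFn h := by
  obtain ⟨U, hUo, hzU, hN⟩ := hz
  refine ⟨h ⁻¹' U, hUo.preimage hd.continuous, hzU, ?_⟩
  intro s hs
  have hs' : ∀ m : ℕ, ∃ k : ℕ, 0 < k ∧ s m = h^[k] := hs
  choose k hkpos hks using hs'
  by_cases hA : {m | k m = 1}.Infinite
  · refine ⟨Nat.nth (fun m => k m = 1), Nat.nth_strictMono hA, Or.inl ⟨h, ?_⟩⟩
    have hconst : ∀ m, s (Nat.nth (fun m => k m = 1) m) = h := by
      intro m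
      have h1 : k (Nat.nth (fun m => k m = 1) m) = 1 := Nat.nth_mem_of_infinite hA m
      rw [hks, h1, Function.iterate_one]
    have : (fun m => s (Nat.nth (fun m => k m = 1) m)) = fun _ => h := funext hconst
    rw [this]
    exact tlu_const
  · rw [Set.not_infinite] at hA
    obtain ⟨N, hNb⟩ := hA.bddAbove
    have hk2 : ∀ m, 2 ≤ k (m + (N + 1)) := by
      intro m
      have hnotmem : m + (N + 1) ∉ {m | k m = 1} := by
        intro hmem
        have := hNb hmem
        omega
      have h1 : k (m + (N + 1)) ≠ 1 := hnotmem
      have h2 := hkpos (m + (N + 1))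
      omega
    obtain ⟨ψ, hψ, halt⟩ := hN (fun m => h^[k (m + (N + 1)) - 1])
      (fun m => ⟨k (m + (N + 1)) - 1, by have := hk2 m; omega, rfl⟩)
    refine ⟨fun m => ψ m + (N + 1), fun a b hab => by dsimp only; have := hψ hab; omega, ?_⟩
    have key : ∀ m, s (ψ m + (N + 1)) = h^[k (ψ m + (N + 1)) - 1] ∘ h := by
      intro m
      rw [hks]
      have hk' := hk2 (ψ m)
      have : k (ψ m + (N + 1)) = (k (ψ m + (N + 1)) - 1) + 1 := by omega
      conv_lhs => rw [this]
      rw [Function.iterate_succ]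
    rcases halt with ⟨G, hG⟩ | hdiv
    · refine Or.inl ⟨G ∘ h, ?_⟩
      have hcomp := hG.comp h (Set.mapsTo_preimage h U) hd.continuous.continuousOn
      have heq : (fun m => s (ψ m + (N + 1)))
          = fun m => h^[k (ψ m + (N + 1)) - 1] ∘ h := funext key
      rw [heq]
      exact hcomp
    · refine Or.inr ?_
      intro K hK hKc M
      have hKU : h '' K ⊆ U := by rintro _ ⟨x, hx, rfl⟩; exact hK hx
      filter_upwards [hdiv (h '' K) hKU (hKc.image hd.continuous) M] with m hm z hzK
      have := hm (h z) ⟨z, hzK, rfl⟩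
      rw [key m]
      exact this

/-- if `G = [g₁, …, gₙ]` is a finitely generated transcendental
semigroup such that for every `g ∈ G` all stable domains (components of `F(g)`)
are bounded, then `F(G)` contains no asymptotic value of any `g ∈ G`. -/
theorem stmt11 (n : ℕ) (hn : 0 < n) (g : Fin n → ℂ → ℂ)
    (htr : ∀ i, TranscendentalEntire (g i))
    (hbd : ∀ h ∈ semigroupGen (Set.range g),
      ∀ V, IsComponentOf V (fatouFn h) → Bornology.IsBounded V) :
    ∀ w ∈ fatou (semigroupGen (Set.range g)),
      ¬ ∃ h ∈ semigroupGen (Set.range g), AsymptoticValue h w := by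
  intro w hw
  rintro ⟨h, hhG, γ, hγc, hginf, hγw⟩
  have hd : Differentiable ℂ h := by
    refine semigroupGen_differentiable ?_ h hhG
    rintro f ⟨i, rfl⟩
    exact (htr i).1
  have hwF : w ∈ fatouFn h := fatou_subset_fatouFn hhG hw
  obtain ⟨U, hUo, hwU, hN⟩ := hwF
  have hUsub : U ⊆ fatouFn h := fun z hz => ⟨U, hUo, hz, hN⟩
  obtain ⟨ε, hε, hball⟩ := Metric.isOpen_iff.mp hUo w hwU
  have hev : ∀ᶠ t in atTop, h (γ t) ∈ Metric.ball w ε :=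
    hγw (Metric.ball_mem_nhds w hε)
  obtain ⟨T₀, hT₀⟩ := Filter.eventually_atTop.mp hev
  set T : ℝ := max T₀ 0 with hT
  have hT0 : (0 : ℝ) ≤ T := le_max_right _ _
  have hmem : ∀ t ∈ Ici T, γ t ∈ fatouFn h := by
    intro t ht
    have ht' : T₀ ≤ t := le_trans (le_max_left _ _) ht
    exact fatouFn_backward hd (hUsub (hball (hT₀ t ht')))
  set C : Set ℂ := γ '' Ici T with hC
  have hCconn : IsPreconnected C :=
    isPreconnected_Ici.image γ (hγc.mono fun t ht => le_trans hT0 ht)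
  have hγT : γ T ∈ fatouFn h := hmem T (self_mem_Ici)
  have hCsub : C ⊆ fatouFn h := by rintro _ ⟨t, ht, rfl⟩; exact hmem t ht
  have hCcomp : C ⊆ connectedComponentIn (fatouFn h) (γ T) :=
    hCconn.subset_connectedComponentIn ⟨T, self_mem_Ici, rfl⟩ hCsub
  have hVbd : Bornology.IsBounded (connectedComponentIn (fatouFn h) (γ T)) :=
    hbd h hhG _ ⟨γ T, hγT, rfl⟩
  have hCbd : Bornology.IsBounded C := hVbd.subset hCcomp
  obtain ⟨R, hR⟩ := isBounded_iff_forall_norm_le.mp hCbd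
  obtain ⟨t, ht⟩ := ((hginf.eventually_gt_atTop R).and (eventually_ge_atTop T)).exists
  have := hR (γ t) ⟨t, ht.2, rfl⟩
  exact absurd this (not_le.mpr ht.1)
end
end
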